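/- arXiv:2106.04288 — 5 statements merged into one kernel-verified Lean document; each statement's English description precedes it below -/
import Mathlib

section
/- lim_{s→∞} (1/(s log s)) Σ_{k=1}^{s−1} 1/sin(kπ/s) = 2/π, where s ranges over the integers s ≥ 2. -/
noncomputable section

open MeasureTheory Real Filter

/-- ℝ³ as a Euclidean space. -/
abbrev R3 : Type := EuclideanSpace ℝ (Fin 3)

/-- The point (a, b, c) ∈ ℝ³. -/
def pt (a b c : ℝ) : R3 := (WithLp.equiv 2 (Fin 3 → ℝ)).symm ![a, b, c]

/-- The Laplacian of `f : ℝ³ → ℝ`, as the sum of the second partial derivatives. -/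
def lap (f : R3 → ℝ) (x : R3) : ℝ :=
  ∑ i : Fin 3, fderiv ℝ (fun y => fderiv ℝ f y (EuclideanSpace.single i 1)) x
    (EuclideanSpace.single i 1)

/-- The Schrödinger–Newton ground state: a pair (U, Ψ) of positive, radially
symmetric C² functions solving ΔU − U + ΨU = 0, ΔΨ + (1/2)U² = 0 on ℝ³,
tending to 0 at infinity, with U(0) = max U, U strictly decreasing in |x| and
|x|e^{|x|}U(x) → λ₀ > 0 as |x| → ∞. -/
structure GroundState (U Ψ : R3 → ℝ) : Prop where
  smoothU : ContDiff ℝ 2 U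
  smoothΨ : ContDiff ℝ 2 Ψ
  posU : ∀ x, 0 < U x
  posΨ : ∀ x, 0 < Ψ x
  radU : ∀ x y : R3, ‖x‖ = ‖y‖ → U x = U y
  radΨ : ∀ x y : R3, ‖x‖ = ‖y‖ → Ψ x = Ψ y
  maxU : ∀ x, U x ≤ U 0
  eqU : ∀ x, lap U x - U x + Ψ x * U x = 0
  eqΨ : ∀ x, lap Ψ x + (1/2) * (U x)^2 = 0
  limU : ∀ ε > 0, ∃ R : ℝ, ∀ x : R3, R ≤ ‖x‖ → |U x| ≤ ε
  limΨ : ∀ ε > 0, ∃ R : ℝ, ∀ x : R3, R ≤ ‖x‖ → |Ψ x| ≤ ε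
  decU : ∀ x y : R3, ‖x‖ < ‖y‖ → U y < U x
  decayU : ∃ lam₀ > (0:ℝ), ∀ ε > 0, ∃ R : ℝ, ∀ x : R3, R ≤ ‖x‖ →
    |‖x‖ * Real.exp ‖x‖ * U x - lam₀| ≤ ε

/-- Condition (H) on the radial potential V, with constants V₀, a, θ, m. -/
def CondH (V : ℝ → ℝ) (V₀ a θ m : ℝ) : Prop :=
  ContinuousOn V (Set.Ioi 0) ∧
  (∃ Cb : ℝ, ∀ ρ ∈ Set.Ioi (0:ℝ), |V ρ| ≤ Cb) ∧
  0 < V₀ ∧ 0 < a ∧ 0 < θ ∧ 1/2 ≤ m ∧ m < 1 ∧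
  (∀ ρ ∈ Set.Ioi (0:ℝ), V₀ ≤ V ρ) ∧
  ∃ C_V > (0:ℝ), ∃ R₀ > (0:ℝ), ∀ ρ : ℝ, R₀ ≤ ρ →
    |V ρ - V₀ - a * ρ ^ (-m)| ≤ C_V * ρ ^ (-(m + θ))

/-- The spike locations ξ_i = (r cos(2iπ/s), r sin(2iπ/s), 0), i = 0, …, s−1
(indexed from 0, so that here `xiP s r 0` is ξ₁ of the paper and the spike
`xiP s r (i-1)` is ξ_i of the paper). -/
def xiP (s : ℕ) (r : ℝ) (i : ℕ) : R3 :=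
  pt (r * Real.cos (2 * π * i / s)) (r * Real.sin (2 * π * i / s)) 0

/-- Rotation by angle θ about the x₃-axis. -/
def rotZ (θ : ℝ) (x : R3) : R3 :=
  pt (Real.cos θ * x 0 - Real.sin θ * x 1) (Real.sin θ * x 0 + Real.cos θ * x 1) (x 2)

/-- The sum of bumps U_r = Σ_{i} U(· − ξ_i). -/
def Ur (U : R3 → ℝ) (s : ℕ) (r : ℝ) (x : R3) : ℝ :=
  ∑ i ∈ Finset.range s, U (x - xiP s r i)

/-- Z_i(x) = −∇U(x−ξ_i)·(cos θ_i, sin θ_i, 0) = ∂/∂r of U(· − ξ_i). -/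
def Zfun (U : R3 → ℝ) (s : ℕ) (r : ℝ) (i : ℕ) (x : R3) : ℝ :=
  -(inner ℝ (gradient U (x - xiP s r i))
      (pt (Real.cos (2 * π * i / s)) (Real.sin (2 * π * i / s)) 0) : ℝ)

/-- Membership in the symmetry class 𝓔_s with the orthogonality conditions. -/
def memEs (U : R3 → ℝ) (s : ℕ) (r : ℝ) (w : R3 → ℝ) : Prop :=
  (∀ x : R3, w (pt (x 0) (-(x 1)) (x 2)) = w x) ∧
  (∀ x : R3, w (pt (x 0) (x 1) (-(x 2))) = w x) ∧
  (∀ x : R3, w (rotZ (2 * π / s) x) = w x) ∧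
  (∀ i ∈ Finset.range s,
    ∫ x : R3, (∫ y : R3,
      ((U (y - xiP s r i))^2 * Zfun U s r i x
        + 2 * U (y - xiP s r i) * Zfun U s r i y * U (x - xiP s r i)) * w x / ‖x - y‖) = 0)

section Aux

open Real Finset

lemma aux_inv_sin_le {x : ℝ} (hx : 0 < x) (hx2 : x ≤ π/2) :
    1 / Real.sin x ≤ 1 / x + 1 := by
  have hpi := Real.pi_pos
  have hs : 0 < Real.sin x :=
    Real.sin_pos_of_pos_of_lt_pi hx (lt_of_le_of_lt hx2 (by linarith))
  have h2 : 2 / π * x ≤ Real.sin x := Real.mul_le_sin hx.le hx2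
  have h2pi : (1:ℝ)/2 ≤ 2/π := by
    rw [div_le_div_iff₀ (by norm_num) hpi]; linarith [Real.pi_le_four]
  have hsin2 : x/2 ≤ Real.sin x := by
    calc x/2 = 1/2 * x := by ring
      _ ≤ 2/π * x := mul_le_mul_of_nonneg_right h2pi hx.le
      _ ≤ Real.sin x := h2
  have key : x ≤ Real.sin x * (1 + x) := by
    rcases le_or_gt x 1 with h1 | h1
    · have h3 := Real.sin_gt_sub_cube hx
      nlinarith [mul_le_mul_of_nonneg_right hsin2 hx.le, sq_nonneg x,
        mul_nonneg (mul_nonneg hx.le hx.le) (sub_nonneg.2 h1)]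
    · nlinarith [mul_le_mul_of_nonneg_right hsin2 (by linarith : (0:ℝ) ≤ 1 + x)]
  calc 1 / Real.sin x ≤ (1 + x) / x := by
        rw [div_le_div_iff₀ hs hx]; linarith
    _ = 1 / x + 1 := by field_simp

lemma aux_term_bounds {s k : ℕ} (hs : 2 ≤ s) (hk1 : 1 ≤ k) (hk2 : k ≤ s - 1) :
    (s:ℝ)/π * (1/(k:ℝ) + 1/((s-k : ℕ):ℝ)) - 1 ≤ 1 / Real.sin ((k:ℝ) * π / s) ∧
    1 / Real.sin ((k:ℝ) * π / s) ≤ (s:ℝ)/π * (1/(k:ℝ) + 1/((s-k : ℕ):ℝ)) + 1 := by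
  have hpi := Real.pi_pos
  have hks : k < s := lt_of_le_of_lt hk2 (Nat.sub_lt (by omega) one_pos)
  have hsk1 : 1 ≤ s - k := by omega
  set m := min k (s - k) with hm
  set M := max k (s - k) with hM
  have hm1 : 1 ≤ m := le_min hk1 hsk1
  have h2m : 2 * m ≤ s := by
    have := min_le_left k (s - k); have := min_le_right k (s - k); omega
  have hM2 : s ≤ 2 * M := by
    have := le_max_left k (s - k); have := le_max_right k (s - k); omega
  have hs0 : (0:ℝ) < s := by positivity
  have hm0 : (0:ℝ) < m := by exact_mod_cast hm1
  have hM0 : (0:ℝ) < M := by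
    have : 1 ≤ M := hm1.trans (min_le_max); exact_mod_cast this
  have hx : 0 < (m:ℝ) * π / s := by positivity
  have hx2 : (m:ℝ) * π / s ≤ π / 2 := by
    rw [div_le_div_iff₀ hs0 (by norm_num : (0:ℝ) < 2)]
    have h2m' : (2:ℝ) * m ≤ s := by exact_mod_cast h2m
    nlinarith
  have hsin_eq : Real.sin ((k:ℝ) * π / s) = Real.sin ((m:ℝ) * π / s) := by
    rcases le_total k (s - k) with h | h
    · rw [hm, min_eq_left h]
    · rw [hm, min_eq_right h]
      have hcast : ((s - k : ℕ) : ℝ) = (s:ℝ) - k := by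
        push_cast [Nat.cast_sub hks.le]; ring
      have harg : ((s - k : ℕ):ℝ) * π / s = π - (k:ℝ) * π / s := by
        rw [hcast]; field_simp
      rw [harg, Real.sin_pi_sub]
  have hsin_pos : 0 < Real.sin ((m:ℝ) * π / s) :=
    Real.sin_pos_of_pos_of_lt_pi hx (lt_of_le_of_lt hx2 (by linarith))
  have hsin_le : Real.sin ((m:ℝ) * π / s) ≤ (m:ℝ) * π / s := Real.sin_le hx.le
  have lower_m : 1 / ((m:ℝ) * π / s) ≤ 1 / Real.sin ((m:ℝ) * π / s) :=
    one_div_le_one_div_of_le hsin_pos hsin_le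
  have upper_m : 1 / Real.sin ((m:ℝ) * π / s) ≤ 1 / ((m:ℝ) * π / s) + 1 :=
    aux_inv_sin_le hx hx2
  have hinv : 1 / ((m:ℝ) * π / s) = (s:ℝ)/π * (1/(m:ℝ)) := by
    rw [one_div_div]; ring
  have hsum : 1/(k:ℝ) + 1/((s-k : ℕ):ℝ) = 1/(m:ℝ) + 1/(M:ℝ) := by
    rcases le_total k (s - k) with h | h
    · rw [hm, hM, min_eq_left h, max_eq_right h]
    · rw [hm, hM, min_eq_right h, max_eq_left h, add_comm]
  have hMsmall : (s:ℝ)/π * (1/(M:ℝ)) ≤ 1 := by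
    have hM2' : (s:ℝ) ≤ 2 * M := by exact_mod_cast hM2
    have h2pi : (2:ℝ) ≤ π := Real.two_le_pi
    rw [div_mul_eq_mul_div, div_le_one (by positivity), mul_one_div,
      div_le_iff₀ hM0]
    nlinarith
  have hMnonneg : 0 ≤ (s:ℝ)/π * (1/(M:ℝ)) := by positivity
  rw [hsin_eq, hsum, mul_add]
  constructor
  · calc (s:ℝ)/π * (1/(m:ℝ)) + (s:ℝ)/π * (1/(M:ℝ)) - 1
        ≤ (s:ℝ)/π * (1/(m:ℝ)) := by linarith
      _ = 1 / ((m:ℝ) * π / s) := hinv.symm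
      _ ≤ _ := lower_m
  · calc 1 / Real.sin ((m:ℝ) * π / s) ≤ 1 / ((m:ℝ) * π / s) + 1 := upper_m
      _ = (s:ℝ)/π * (1/(m:ℝ)) + 1 := by rw [hinv]
      _ ≤ _ := by linarith

/-- The harmonic-type sum over `Icc 1 (s-1)`. -/
def auxH (s : ℕ) : ℝ := ∑ k ∈ Finset.Icc 1 (s - 1), 1/(k:ℝ)

lemma auxH_eq_harmonic (s : ℕ) : auxH s = (harmonic (s - 1) : ℝ) := by
  rw [auxH, harmonic_eq_sum_Icc]
  push_cast
  simp [one_div]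

lemma aux_reflect (s : ℕ) :
    ∑ k ∈ Finset.Icc 1 (s - 1), 1/(((s - k : ℕ)):ℝ) = auxH s := by
  rw [auxH]
  refine Finset.sum_nbij' (fun k => s - k) (fun k => s - k) ?_ ?_ ?_ ?_ ?_ <;>
    intro a ha <;> simp only [Finset.mem_Icc] at ha ⊢ <;> try omega

lemma aux_log_tendsto : Filter.Tendsto (fun s : ℕ => 1 / Real.log s)
    Filter.atTop (nhds 0) := by
  have h : Filter.Tendsto (fun s : ℕ => Real.log s) Filter.atTop Filter.atTop :=
    Real.tendsto_log_atTop.comp tendsto_natCast_atTop_atTop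
  simp only [one_div]; exact h.inv_tendsto_atTop

lemma aux_H_div_log : Filter.Tendsto (fun s : ℕ => auxH s / Real.log s)
    Filter.atTop (nhds 1) := by
  have hupper : Filter.Tendsto (fun s : ℕ => 1 + 1 / Real.log s)
      Filter.atTop (nhds 1) := by
    simpa using (tendsto_const_nhds (x := (1:ℝ))).add aux_log_tendsto
  refine tendsto_of_tendsto_of_tendsto_of_le_of_le' tendsto_const_nhds hupper ?_ ?_
  · filter_upwards [Filter.eventually_atTop.2 ⟨2, fun s hs => hs⟩] with s hs
    have hlogpos : 0 < Real.log s := by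
      apply Real.log_pos; exact_mod_cast Nat.lt_of_lt_of_le one_lt_two hs
    have hH : Real.log s ≤ auxH s := by
      have := log_add_one_le_harmonic (s - 1)
      rw [auxH_eq_harmonic]
      have hcast : ((s - 1 + 1 : ℕ) : ℝ) = (s : ℝ) := by
        congr 1; omega
      rwa [hcast] at this
    rw [le_div_iff₀ hlogpos, one_mul]; exact hH
  · filter_upwards [Filter.eventually_atTop.2 ⟨2, fun s hs => hs⟩] with s hs
    have hlogpos : 0 < Real.log s := by
      apply Real.log_pos; exact_mod_cast Nat.lt_of_lt_of_le one_lt_two hs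
    have hH : auxH s ≤ 1 + Real.log s := by
      rw [auxH_eq_harmonic]
      refine (harmonic_le_one_add_log (s - 1)).trans ?_
      have h1 : ((s - 1 : ℕ):ℝ) ≤ (s:ℝ) := by exact_mod_cast Nat.sub_le s 1
      have h0 : (0:ℝ) < ((s - 1 : ℕ):ℝ) := by
        have : 1 ≤ s - 1 := by omega
        exact_mod_cast this
      linarith [Real.log_le_log h0 h1]
    rw [div_le_iff₀ hlogpos]
    calc auxH s ≤ 1 + Real.log s := hH
      _ = (1 + 1 / Real.log s) * Real.log s := by field_simp; ring

end Aux

/-- lim_{s→∞} (1/(s log s)) Σ_{k=1}^{s−1} 1/sin(kπ/s) = 2/π. -/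
theorem sum_inv_sin_asymptotics :
    Filter.Tendsto
      (fun s : ℕ =>
        (1 / ((s : ℝ) * Real.log s)) * ∑ k ∈ Finset.Icc 1 (s-1), 1 / Real.sin (k * π / s))
      Filter.atTop (nhds (2/π)) := by
  have hpi := Real.pi_pos
  have hlow : Filter.Tendsto (fun s : ℕ => 2/π * (auxH s / Real.log s) - 1/Real.log s)
      Filter.atTop (nhds (2/π)) := by
    have := (aux_H_div_log.const_mul (2/π)).sub aux_log_tendsto
    simpa using this
  have hup : Filter.Tendsto (fun s : ℕ => 2/π * (auxH s / Real.log s) + 1/Real.log s)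
      Filter.atTop (nhds (2/π)) := by
    have := (aux_H_div_log.const_mul (2/π)).add aux_log_tendsto
    simpa using this
  refine tendsto_of_tendsto_of_tendsto_of_le_of_le' hlow hup ?_ ?_
  all_goals
    filter_upwards [Filter.eventually_atTop.2 ⟨2, fun s hs => hs⟩] with s hs
  all_goals
    have hs0 : (0:ℝ) < s := by positivity
    have hlogpos : 0 < Real.log s := by
      apply Real.log_pos; exact_mod_cast Nat.lt_of_lt_of_le one_lt_two hs
    have hcpos : (0:ℝ) < 1 / ((s:ℝ) * Real.log s) := by positivity
    have hsum_split : ∑ k ∈ Finset.Icc 1 (s-1), ((s:ℝ)/π * (1/(k:ℝ) + 1/((s-k : ℕ):ℝ)))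
        = 2 * (s:ℝ)/π * auxH s := by
      rw [← Finset.mul_sum, Finset.sum_add_distrib, aux_reflect]
      rw [show ∑ k ∈ Finset.Icc 1 (s-1), 1/(k:ℝ) = auxH s from rfl]
      ring
    have hcard : ((Finset.Icc 1 (s-1)).card : ℝ) ≤ (s:ℝ) := by
      rw [Nat.card_Icc]
      exact_mod_cast Nat.le_of_lt_succ (by omega : s - 1 + 1 - 1 < s + 1)
  · -- lower bound
    have hsum_le : ∑ k ∈ Finset.Icc 1 (s-1), ((s:ℝ)/π * (1/(k:ℝ) + 1/((s-k : ℕ):ℝ)) - 1)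
        ≤ ∑ k ∈ Finset.Icc 1 (s-1), 1 / Real.sin ((k:ℝ) * π / s) := by
      refine Finset.sum_le_sum fun k hk => ?_
      simp only [Finset.mem_Icc] at hk
      exact (aux_term_bounds hs hk.1 hk.2).1
    rw [Finset.sum_sub_distrib, hsum_split, Finset.sum_const, nsmul_eq_mul, mul_one] at hsum_le
    have step : 2 * (s:ℝ)/π * auxH s - (s:ℝ)
        ≤ ∑ k ∈ Finset.Icc 1 (s-1), 1 / Real.sin ((k:ℝ) * π / s) := by
      linarith
    have := mul_le_mul_of_nonneg_left step hcpos.le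
    calc 2/π * (auxH s / Real.log s) - 1/Real.log s
        = 1 / ((s:ℝ) * Real.log s) * (2 * (s:ℝ)/π * auxH s - (s:ℝ)) := by
          field_simp
      _ ≤ _ := this
  · -- upper bound
    have hsum_le : ∑ k ∈ Finset.Icc 1 (s-1), 1 / Real.sin ((k:ℝ) * π / s)
        ≤ ∑ k ∈ Finset.Icc 1 (s-1), ((s:ℝ)/π * (1/(k:ℝ) + 1/((s-k : ℕ):ℝ)) + 1) := by
      refine Finset.sum_le_sum fun k hk => ?_
      simp only [Finset.mem_Icc] at hk
      exact (aux_term_bounds hs hk.1 hk.2).2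
    rw [Finset.sum_add_distrib, hsum_split, Finset.sum_const, nsmul_eq_mul, mul_one] at hsum_le
    have step : ∑ k ∈ Finset.Icc 1 (s-1), 1 / Real.sin ((k:ℝ) * π / s)
        ≤ 2 * (s:ℝ)/π * auxH s + (s:ℝ) := by linarith
    have := mul_le_mul_of_nonneg_left step hcpos.le
    calc 1 / ((s:ℝ) * Real.log s) * ∑ k ∈ Finset.Icc 1 (s-1), 1 / Real.sin ((k:ℝ) * π / s)
        ≤ 1 / ((s:ℝ) * Real.log s) * (2 * (s:ℝ)/π * auxH s + (s:ℝ)) := this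
      _ = 2/π * (auxH s / Real.log s) + 1/Real.log s := by
          field_simp
end
end

section
/- Let f : ℝ³ → [0,∞) be measurable and suppose there are constants C₀ > 0 and δ > 0 with f(x) ≤ C₀ e^{−δ|x|} for all x. Then there exists a constant C > 0 such that for every ξ ∈ ℝ³ with |ξ| ≥ 1, | ∫_{ℝ³}∫_{ℝ³} f(x) f(y) / |x − y + ξ| dx dy − (∫_{ℝ³} f)² / |ξ| | ≤ C / |ξ|². -/
noncomputable section

open MeasureTheory Real Filter

open Metric Set in
lemma exp_bound_aux {c t : ℝ} (hc : 0 < c) (ht : 0 ≤ t) :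
    Real.exp (-c * t) ≤ (max 1 (4/c))^4 * (1 + t) ^ (-(4:ℝ)) := by
  have h1t : (0:ℝ) < 1 + t := by linarith
  have hM : (0:ℝ) < max 1 (4/c) := lt_max_of_lt_left one_pos
  have key : 1 + t ≤ max 1 (4/c) * Real.exp (c * t / 4) := by
    have h1 : 1 + c * t / 4 ≤ Real.exp (c * t / 4) := by
      have := Real.add_one_le_exp (c * t / 4); linarith
    have h2 : 1 + t ≤ max 1 (4/c) * (1 + c * t / 4) := by
      have hm1 : (1:ℝ) ≤ max 1 (4/c) := le_max_left _ _
      have hm2 : 4/c ≤ max 1 (4/c) := le_max_right _ _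
      have : t = (4/c) * (c * t / 4) := by field_simp
      nlinarith [mul_nonneg (mul_nonneg hc.le ht) (sub_nonneg.2 hm2)]
    calc 1 + t ≤ max 1 (4/c) * (1 + c * t / 4) := h2
      _ ≤ max 1 (4/c) * Real.exp (c * t / 4) := by
          exact mul_le_mul_of_nonneg_left h1 hM.le
  have key4 : (1 + t)^(4:ℕ) ≤ (max 1 (4/c))^4 * Real.exp (c * t) := by
    calc (1 + t)^(4:ℕ) ≤ (max 1 (4/c) * Real.exp (c * t / 4))^(4:ℕ) := by
          exact pow_le_pow_left₀ h1t.le key 4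
      _ = (max 1 (4/c))^4 * Real.exp (c * t) := by
          rw [mul_pow, ← Real.exp_nat_mul]; ring_nf
  have hrw : (1 + t) ^ (-(4:ℝ)) = ((1+t)^(4:ℕ))⁻¹ := by
    rw [← Real.rpow_natCast (1+t) 4, ← Real.rpow_neg h1t.le]; norm_num
  rw [hrw]
  have h4 : (0:ℝ) < (1+t)^(4:ℕ) := by positivity
  rw [show (max 1 (4/c))^4 * ((1+t)^(4:ℕ))⁻¹ = (max 1 (4/c))^4 / (1+t)^(4:ℕ) from
    (div_eq_mul_inv _ _).symm, le_div_iff₀ h4]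
  calc Real.exp (-c*t) * (1+t)^(4:ℕ)
      ≤ Real.exp (-c*t) * ((max 1 (4/c))^4 * Real.exp (c*t)) :=
        mul_le_mul_of_nonneg_left key4 (Real.exp_pos _).le
    _ = (max 1 (4/c))^4 * (Real.exp (-c*t) * Real.exp (c*t)) := by ring
    _ = (max 1 (4/c))^4 := by rw [← Real.exp_add]; simp

lemma integrable_exp_norm (c : ℝ) (hc : 0 < c) :
    Integrable (fun x : R3 => Real.exp (-c * ‖x‖)) := by
  have hfin : ((Module.finrank ℝ R3 : ℝ)) < 4 := by simp; norm_num
  have base := (integrable_one_add_norm (E := R3) (μ := volume) hfin).const_mul ((max 1 (4/c))^4)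
  refine base.mono' ?_ ?_
  · exact (Real.continuous_exp.comp (continuous_const.mul continuous_norm)).aestronglyMeasurable
  · filter_upwards with x
    rw [Real.norm_eq_abs, abs_of_pos (Real.exp_pos _)]
    exact exp_bound_aux hc (norm_nonneg x)

lemma integrable_norm_exp_norm (c : ℝ) (hc : 0 < c) :
    Integrable (fun x : R3 => ‖x‖ * Real.exp (-c * ‖x‖)) := by
  have base := (integrable_exp_norm (c/2) (by linarith)).const_mul (2/c)
  refine base.mono' ?_ ?_
  · exact (continuous_norm.mul (Real.continuous_exp.comp
      (continuous_const.mul continuous_norm))).aestronglyMeasurable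
  · filter_upwards with x
    rw [Real.norm_eq_abs, abs_of_nonneg (by positivity)]
    have ht := norm_nonneg x
    set t := ‖x‖
    have h1 : c/2 * t ≤ Real.exp (c/2 * t) := by
      have := Real.add_one_le_exp (c/2*t); linarith [Real.exp_pos (c/2*t)]
    have h2 : t ≤ 2/c * Real.exp (c/2*t) := by
      rw [div_mul_eq_mul_div, le_div_iff₀ hc]; nlinarith
    calc t * Real.exp (-c * t) ≤ (2/c * Real.exp (c/2*t)) * Real.exp (-c*t) := by
          exact mul_le_mul_of_nonneg_right h2 (Real.exp_pos _).le
      _ = 2/c * Real.exp (-(c/2) * t) := by rw [mul_assoc, ← Real.exp_add]; ring_nf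

open Metric Set in
lemma intOn_inv_norm_ball : IntegrableOn (fun z : R3 => ‖z‖⁻¹) (ball 0 1) volume := by
  constructor
  · exact (measurable_norm.inv).aestronglyMeasurable
  · rw [hasFiniteIntegral_iff_norm]
    set S : ℕ → Set R3 := fun k => ball 0 ((2:ℝ)⁻¹^k) \ ball 0 ((2:ℝ)⁻¹^(k+1)) with hS
    have hcover : ball (0:R3) 1 ⊆ {0} ∪ ⋃ k, S k := by
      intro z hz
      rcases eq_or_ne z 0 with rfl | hz0
      · exact Or.inl rfl
      right
      have hz1 : ‖z‖ < 1 := by simpa [mem_ball, dist_zero_right] using hz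
      have hzpos : 0 < ‖z‖ := norm_pos_iff.2 hz0
      have hex : ∃ n : ℕ, (2:ℝ)⁻¹ ^ n ≤ ‖z‖ := by
        obtain ⟨n, hn⟩ := exists_pow_lt_of_lt_one hzpos (by norm_num : (2:ℝ)⁻¹ < 1)
        exact ⟨n, hn.le⟩
      classical
      let n := Nat.find hex
      have hn : (2:ℝ)⁻¹ ^ n ≤ ‖z‖ := Nat.find_spec hex
      have hnpos : n ≠ 0 := by
        intro h0
        have := hn; rw [h0, pow_zero] at this; linarith
      obtain ⟨k, hkeq⟩ := Nat.exists_eq_succ_of_ne_zero hnpos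
      rw [hkeq] at hn
      have hk : ¬ ((2:ℝ)⁻¹ ^ k ≤ ‖z‖) := Nat.find_min hex (show k < Nat.find hex by rw [show Nat.find hex = k.succ from hkeq]; omega)
      refine mem_iUnion.2 ⟨k, ?_, ?_⟩
      · simpa [mem_ball, dist_zero_right] using lt_of_not_ge hk
      · simpa [mem_ball, dist_zero_right, not_lt] using hn
    calc ∫⁻ z in ball (0:R3) 1, ENNReal.ofReal ‖(‖z‖⁻¹)‖
        ≤ ∫⁻ z in ({0} ∪ ⋃ k, S k : Set R3), ENNReal.ofReal ‖(‖z‖⁻¹)‖ :=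
          lintegral_mono_set hcover
      _ ≤ (∫⁻ z in ({0} : Set R3), ENNReal.ofReal ‖(‖z‖⁻¹)‖)
          + ∫⁻ z in (⋃ k, S k : Set R3), ENNReal.ofReal ‖(‖z‖⁻¹)‖ :=
          lintegral_union_le _ _ _
      _ ≤ 0 + ∑' k, ∫⁻ z in S k, ENNReal.ofReal ‖(‖z‖⁻¹)‖ := by
          gcongr
          · rw [setLIntegral_measure_zero]; exact measure_singleton 0
          · exact lintegral_iUnion_le _ _
      _ = ∑' k, ∫⁻ z in S k, ENNReal.ofReal ‖(‖z‖⁻¹)‖ := by rw [zero_add]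
      _ ≤ ∑' k, ENNReal.ofReal (2 * 4⁻¹^k) * volume (ball (0:R3) 1) := by
          gcongr with k
          have hbound : ∀ z ∈ S k, ENNReal.ofReal ‖(‖z‖⁻¹)‖ ≤ ENNReal.ofReal (2^(k+1)) := by
            intro z hz
            have h1 : (2:ℝ)⁻¹^(k+1) ≤ ‖z‖ := by
              have := hz.2; simpa [mem_ball, dist_zero_right, not_lt] using this
            have h2 : (0:ℝ) < (2:ℝ)⁻¹^(k+1) := by positivity
            apply ENNReal.ofReal_le_ofReal
            rw [Real.norm_eq_abs, abs_of_nonneg (by positivity)]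
            calc ‖z‖⁻¹ ≤ ((2:ℝ)⁻¹^(k+1))⁻¹ := by
                  exact inv_anti₀ h2 h1
              _ = 2^(k+1) := by rw [← inv_pow, inv_inv]
          calc ∫⁻ z in S k, ENNReal.ofReal ‖(‖z‖⁻¹)‖
              ≤ ∫⁻ _ in S k, ENNReal.ofReal (2^(k+1)) := by
                refine setLIntegral_mono' ?_ hbound
                exact (measurableSet_ball.diff measurableSet_ball)
            _ = ENNReal.ofReal (2^(k+1)) * volume (S k) := by
                rw [setLIntegral_const]
            _ ≤ ENNReal.ofReal (2^(k+1)) * volume (ball (0:R3) ((2:ℝ)⁻¹^k)) := by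
                gcongr
                exact show S k ⊆ ball (0:R3) ((2:ℝ)⁻¹^k) from Set.diff_subset
            _ = ENNReal.ofReal (2 * 4⁻¹^k) * volume (ball (0:R3) 1) := by
                rw [Measure.addHaar_ball volume (0:R3) (by positivity : (0:ℝ) ≤ (2:ℝ)⁻¹^k)]
                rw [← mul_assoc, ← ENNReal.ofReal_mul (by positivity)]
                congr 2
                have : Module.finrank ℝ R3 = 3 := by simp
                rw [this]
                have hp : (0:ℝ) < 2^k := by positivity
                have h1 : ((2:ℝ)⁻¹)^k = ((2:ℝ)^k)⁻¹ := by rw [inv_pow]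
                have h2 : ((4:ℝ)⁻¹)^k = (((2:ℝ)^k)^2)⁻¹ := by
                  rw [inv_pow]; congr 1
                  rw [show (4:ℝ) = 2^2 by norm_num, ← pow_mul, mul_comm, pow_mul]
                rw [h1, h2, pow_succ]
                field_simp
      _ = ∑' k : ℕ, (ENNReal.ofReal 4⁻¹)^k * (ENNReal.ofReal 2 * volume (ball (0:R3) 1)) := by
          refine tsum_congr fun k => ?_
          rw [ENNReal.ofReal_mul (by norm_num), ENNReal.ofReal_pow (by norm_num)]
          ring
      _ = (∑' k : ℕ, (ENNReal.ofReal 4⁻¹)^k) * (ENNReal.ofReal 2 * volume (ball (0:R3) 1)) :=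
          ENNReal.tsum_mul_right
      _ < ⊤ := by
          rw [ENNReal.tsum_geometric]
          refine ENNReal.mul_lt_top ?_ ?_
          · refine ENNReal.inv_lt_top.2 (tsub_pos_of_lt ?_)
            exact ENNReal.ofReal_lt_one.2 (by norm_num)
          · exact ENNReal.mul_lt_top ENNReal.ofReal_lt_top measure_ball_lt_top

open Metric Set in
lemma conv_bound (a : ℝ) (ha : 0 < a) (c : R3) :
    Integrable (fun y : R3 => Real.exp (-a*‖y‖) * ‖y - c‖⁻¹) ∧
    ∫ y : R3, Real.exp (-a*‖y‖) * ‖y - c‖⁻¹ ≤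
      (∫ z in ball (0:R3) 1, ‖z‖⁻¹) + ∫ y : R3, Real.exp (-a*‖y‖) := by
  have hexpint : Integrable (fun y : R3 => Real.exp (-a*‖y‖)) :=
    integrable_exp_norm a ha
  set ψ : R3 → ℝ := fun y =>
    (ball c 1).indicator (fun y => ‖y - c‖⁻¹) y + Real.exp (-a*‖y‖) with hψ
  have hindrw : (ball c 1).indicator (fun y : R3 => ‖y - c‖⁻¹)
      = fun y => ((ball (0:R3) 1).indicator (fun z => ‖z‖⁻¹)) (y - c) := by
    funext y
    by_cases h : y ∈ ball c 1
    · have h' : y - c ∈ ball (0:R3) 1 := by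
        simpa [mem_ball, dist_eq_norm] using h
      rw [indicator_of_mem h, indicator_of_mem h']
    · have h' : y - c ∉ ball (0:R3) 1 := by
        simpa [mem_ball, dist_eq_norm] using h
      rw [indicator_of_notMem h, indicator_of_notMem h']
  have hindint : Integrable ((ball c 1).indicator (fun y : R3 => ‖y - c‖⁻¹)) := by
    rw [hindrw]
    exact ((integrable_indicator_iff measurableSet_ball).2 intOn_inv_norm_ball).comp_sub_right c
  have hψint : Integrable ψ := hindint.add hexpint
  have hmeas : Measurable (fun y : R3 => Real.exp (-a*‖y‖) * ‖y - c‖⁻¹) := by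
    exact ((Real.continuous_exp.comp (continuous_const.mul continuous_norm)).measurable).mul
      ((continuous_id.sub continuous_const).norm.measurable.inv)
  have hpt : ∀ y : R3, Real.exp (-a*‖y‖) * ‖y - c‖⁻¹ ≤ ψ y := by
    intro y
    have hexp1 : Real.exp (-a*‖y‖) ≤ 1 := by
      apply Real.exp_le_one_iff.2
      have := norm_nonneg y; nlinarith
    have hexp0 : 0 < Real.exp (-a*‖y‖) := Real.exp_pos _
    by_cases h : y ∈ ball c 1
    · rw [hψ]
      simp only [indicator_of_mem h]
      have h1 : Real.exp (-a*‖y‖) * ‖y - c‖⁻¹ ≤ ‖y - c‖⁻¹ := by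
        nlinarith [inv_nonneg.2 (norm_nonneg (y - c))]
      linarith [hexp0.le]
    · rw [hψ]
      simp only [indicator_of_notMem h]
      have h1 : ‖y - c‖⁻¹ ≤ 1 := by
        have : (1:ℝ) ≤ ‖y - c‖ := by
          simpa [mem_ball, dist_eq_norm, not_lt] using h
        exact inv_le_one_of_one_le₀ this
      nlinarith [inv_nonneg.2 (norm_nonneg (y - c))]
  have hint : Integrable (fun y : R3 => Real.exp (-a*‖y‖) * ‖y - c‖⁻¹) := by
    refine hψint.mono' hmeas.aestronglyMeasurable ?_
    filter_upwards with y
    rw [Real.norm_eq_abs, abs_of_nonneg (by positivity)]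
    exact hpt y
  refine ⟨hint, ?_⟩
  calc ∫ y : R3, Real.exp (-a*‖y‖) * ‖y - c‖⁻¹ ≤ ∫ y, ψ y :=
        integral_mono hint hψint hpt
    _ = (∫ z in ball (0:R3) 1, ‖z‖⁻¹) + ∫ y : R3, Real.exp (-a*‖y‖) := by
        rw [hψ, integral_add hindint hexpint]
        congr 1
        rw [hindrw, integral_sub_right_eq_self
          (fun z => ((ball (0:R3) 1).indicator (fun z : R3 => ‖z‖⁻¹)) z) c,
          integral_indicator measurableSet_ball]

open Metric Set in
lemma key_pt (C₀ δ : ℝ) (hC₀ : 0 < C₀) (hδ : 0 < δ) (f : R3 → ℝ)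
    (hnonneg : ∀ x, 0 ≤ f x) (hdecay : ∀ x : R3, f x ≤ C₀ * Real.exp (-δ * ‖x‖))
    (ξ : R3) (hξ : 1 ≤ ‖ξ‖) (x y : R3) :
    |f x * f y * (‖x - y + ξ‖⁻¹ - ‖ξ‖⁻¹)| ≤
      2*C₀^2*Real.exp (-δ*‖x‖)*Real.exp (-δ*‖y‖)*(‖x‖+‖y‖)/‖ξ‖^2
      + (64/δ^2*C₀^2/‖ξ‖^2) * (Real.exp (-(δ/2)*‖x‖)*Real.exp (-(δ/2)*‖y‖))
        * (1 + ‖y - (x+ξ)‖⁻¹) := by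
  have hξ0 : (0:ℝ) < ‖ξ‖ := lt_of_lt_of_le one_pos hξ
  set z : R3 := x - y + ξ with hz
  have n1 : ‖z‖ = ‖y - (x + ξ)‖ := by
    rw [show z = -(y - (x + ξ)) by rw [hz]; abel, norm_neg]
  have hfx := hnonneg x; have hfy := hnonneg y
  have hdx := hdecay x; have hdy := hdecay y
  have hex : (0:ℝ) < Real.exp (-δ*‖x‖) := Real.exp_pos _
  have hey : (0:ℝ) < Real.exp (-δ*‖y‖) := Real.exp_pos _
  have hxy_norm : ‖x - y‖ ≤ ‖x‖ + ‖y‖ := norm_sub_le x y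
  rw [abs_mul, abs_mul, abs_of_nonneg hfx, abs_of_nonneg hfy]
  by_cases h : ‖x - y‖ ≤ ‖ξ‖/2
  · -- near case
    have hzlow : ‖ξ‖/2 ≤ ‖z‖ := by
      have h1 : ‖ξ‖ ≤ ‖z‖ + ‖x - y‖ := by
        calc ‖ξ‖ = ‖z - (x - y)‖ := by rw [show z - (x-y) = ξ by rw [hz]; abel]
          _ ≤ ‖z‖ + ‖x - y‖ := norm_sub_le _ _
      linarith
    have hz0 : (0:ℝ) < ‖z‖ := by linarith
    have habs : |‖z‖ - ‖ξ‖| ≤ ‖x‖ + ‖y‖ := by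
      calc |‖z‖ - ‖ξ‖| ≤ ‖z - ξ‖ := abs_norm_sub_norm_le _ _
        _ = ‖x - y‖ := by rw [show z - ξ = x - y by rw [hz]; abel]
        _ ≤ ‖x‖ + ‖y‖ := hxy_norm
    have hinv : |‖z‖⁻¹ - ‖ξ‖⁻¹| ≤ 2*(‖x‖+‖y‖)/‖ξ‖^2 := by
      rw [inv_sub_inv hz0.ne' hξ0.ne', abs_div, abs_mul,
        abs_of_pos hz0, abs_of_pos hξ0]
      calc |‖ξ‖ - ‖z‖| / (‖z‖ * ‖ξ‖) ≤ (‖x‖+‖y‖) / ((‖ξ‖/2) * ‖ξ‖) := by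
            apply div_le_div₀ (by positivity) _ (by positivity)
              (mul_le_mul_of_nonneg_right hzlow hξ0.le)
            rw [abs_sub_comm]; exact habs
        _ = 2*(‖x‖+‖y‖)/‖ξ‖^2 := by field_simp
    have hterm2 : 0 ≤ (64/δ^2*C₀^2/‖ξ‖^2) * (Real.exp (-(δ/2)*‖x‖)*Real.exp (-(δ/2)*‖y‖))
        * (1 + ‖y - (x+ξ)‖⁻¹) := by positivity
    have hmain : f x * f y * |‖z‖⁻¹ - ‖ξ‖⁻¹|
        ≤ 2*C₀^2*Real.exp (-δ*‖x‖)*Real.exp (-δ*‖y‖)*(‖x‖+‖y‖)/‖ξ‖^2 := by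
      calc f x * f y * |‖z‖⁻¹ - ‖ξ‖⁻¹|
          ≤ (C₀ * Real.exp (-δ*‖x‖)) * (C₀ * Real.exp (-δ*‖y‖)) * (2*(‖x‖+‖y‖)/‖ξ‖^2) := by
            apply mul_le_mul (mul_le_mul hdx hdy hfy (by positivity)) hinv (abs_nonneg _)
              (by positivity)
        _ = 2*C₀^2*Real.exp (-δ*‖x‖)*Real.exp (-δ*‖y‖)*(‖x‖+‖y‖)/‖ξ‖^2 := by ring
    linarith
  · -- far case
    push_neg at h
    have hsum : ‖ξ‖/2 ≤ ‖x‖ + ‖y‖ := by linarith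
    have hfxy : f x * f y ≤ C₀^2 * (Real.exp (-(δ/2)*‖x‖)*Real.exp (-(δ/2)*‖y‖))
        * Real.exp (-(δ*‖ξ‖/4)) := by
      have e1 : Real.exp (-δ*‖x‖) * Real.exp (-δ*‖y‖)
          = (Real.exp (-(δ/2)*‖x‖)*Real.exp (-(δ/2)*‖y‖))
            * Real.exp (-(δ/2)*(‖x‖+‖y‖)) := by
        rw [← Real.exp_add, ← Real.exp_add, ← Real.exp_add]; ring_nf
      have e2 : Real.exp (-(δ/2)*(‖x‖+‖y‖)) ≤ Real.exp (-(δ*‖ξ‖/4)) := by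
        apply Real.exp_le_exp.2; nlinarith
      calc f x * f y ≤ (C₀ * Real.exp (-δ*‖x‖)) * (C₀ * Real.exp (-δ*‖y‖)) :=
            mul_le_mul hdx hdy hfy (by positivity)
        _ = C₀^2 * (Real.exp (-δ*‖x‖) * Real.exp (-δ*‖y‖)) := by ring
        _ = C₀^2 * ((Real.exp (-(δ/2)*‖x‖)*Real.exp (-(δ/2)*‖y‖))
            * Real.exp (-(δ/2)*(‖x‖+‖y‖))) := by rw [e1]
        _ ≤ _ := by
            rw [← mul_assoc]
            apply mul_le_mul_of_nonneg_left e2 (by positivity)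
    have hexpξ : Real.exp (-(δ*‖ξ‖/4)) ≤ 64/(δ^2*‖ξ‖^2) := by
      set u : ℝ := δ*‖ξ‖/4 with hu
      have hu0 : 0 < u := by positivity
      have h1 : (u/2)^2 ≤ Real.exp u := by
        have h2 : 1 + u/2 ≤ Real.exp (u/2) := by
          have := Real.add_one_le_exp (u/2); linarith
        have h3 : (1 + u/2)^2 ≤ (Real.exp (u/2))^2 := by nlinarith
        rw [← Real.exp_nat_mul] at h3
        norm_num at h3
        calc (u/2)^2 ≤ (1+u/2)^2 := by nlinarith
          _ ≤ _ := by
            rw [show (2:ℝ)*(u/2) = u by ring] at h3; exact h3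
      rw [Real.exp_neg]
      rw [inv_le_comm₀ (Real.exp_pos u) (by positivity)]
      calc (64/(δ^2*‖ξ‖^2))⁻¹ = (u/2)^2 / ((u/2)^2 * (64/(δ^2*‖ξ‖^2))) := by
            field_simp
        _ ≤ Real.exp u := by
            rw [hu]
            have : (δ*‖ξ‖/4/2)^2 * (64/(δ^2*‖ξ‖^2)) = 1 := by field_simp; ring
            rw [this, div_one]
            rw [← hu]; exact h1
    have hD : |‖z‖⁻¹ - ‖ξ‖⁻¹| ≤ 1 + ‖z‖⁻¹ := by
      have h1 : ‖ξ‖⁻¹ ≤ 1 := inv_le_one_of_one_le₀ hξ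
      have h2 : 0 ≤ ‖z‖⁻¹ := inv_nonneg.2 (norm_nonneg _)
      have h3 : 0 ≤ ‖ξ‖⁻¹ := inv_nonneg.2 (norm_nonneg _)
      rw [abs_sub_le_iff]; constructor <;> linarith
    have hterm1 : 0 ≤ 2*C₀^2*Real.exp (-δ*‖x‖)*Real.exp (-δ*‖y‖)*(‖x‖+‖y‖)/‖ξ‖^2 := by
      positivity
    have hmain : f x * f y * |‖z‖⁻¹ - ‖ξ‖⁻¹|
        ≤ (64/δ^2*C₀^2/‖ξ‖^2) * (Real.exp (-(δ/2)*‖x‖)*Real.exp (-(δ/2)*‖y‖))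
          * (1 + ‖y - (x+ξ)‖⁻¹) := by
      rw [← n1]
      calc f x * f y * |‖z‖⁻¹ - ‖ξ‖⁻¹|
          ≤ (C₀^2 * (Real.exp (-(δ/2)*‖x‖)*Real.exp (-(δ/2)*‖y‖)) * (64/(δ^2*‖ξ‖^2)))
            * (1 + ‖z‖⁻¹) := by
            apply mul_le_mul _ hD (abs_nonneg _) (by positivity)
            calc f x * f y ≤ C₀^2 * (Real.exp (-(δ/2)*‖x‖)*Real.exp (-(δ/2)*‖y‖))
                * Real.exp (-(δ*‖ξ‖/4)) := hfxy
              _ ≤ _ := by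
                apply mul_le_mul_of_nonneg_left hexpξ (by positivity)
        _ = (64/δ^2*C₀^2/‖ξ‖^2) * (Real.exp (-(δ/2)*‖x‖)*Real.exp (-(δ/2)*‖y‖))
            * (1 + ‖z‖⁻¹) := by ring
    linarith

open Metric Set in
set_option maxHeartbeats 1000000 in
/-- expansion of the shifted Coulomb interaction of an
exponentially decaying density. -/
theorem coulomb_interaction_expansion
    (f : R3 → ℝ) (hmeas : Measurable f) (hnonneg : ∀ x, 0 ≤ f x)
    (C₀ δ : ℝ) (hC₀ : 0 < C₀) (hδ : 0 < δ)
    (hdecay : ∀ x : R3, f x ≤ C₀ * Real.exp (-δ * ‖x‖)) :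
    ∃ C > (0:ℝ), ∀ ξ : R3, 1 ≤ ‖ξ‖ →
      |(∫ x : R3, ∫ y : R3, f x * f y / ‖x - y + ξ‖)
        - (∫ x : R3, f x)^2 / ‖ξ‖|
      ≤ C / ‖ξ‖^2 := by
  have hδ2 : (0:ℝ) < δ/2 := by linarith
  have hfint : Integrable f := by
    refine ((integrable_exp_norm δ hδ).const_mul C₀).mono' hmeas.aestronglyMeasurable ?_
    filter_upwards with x
    rw [Real.norm_eq_abs, abs_of_nonneg (hnonneg x)]
    exact hdecay x
  set M := ∫ x : R3, f x with hM
  have hM0 : 0 ≤ M := integral_nonneg hnonneg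
  set A := ∫ y : R3, Real.exp (-δ*‖y‖) with hA
  set A' := ∫ y : R3, ‖y‖ * Real.exp (-δ*‖y‖) with hA'
  set H := ∫ y : R3, Real.exp (-(δ/2)*‖y‖) with hH
  set W := ∫ z in ball (0:R3) 1, ‖z‖⁻¹ with hW
  have hA0 : 0 ≤ A := integral_nonneg (fun _ => (Real.exp_pos _).le)
  have hA'0 : 0 ≤ A' := integral_nonneg (fun y => by positivity)
  have hH0 : 0 ≤ H := integral_nonneg (fun _ => (Real.exp_pos _).le)
  have hW0 : 0 ≤ W := setIntegral_nonneg measurableSet_ball (fun z _ => by positivity)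
  set Φ : R3 → ℝ := fun x => 2*C₀^2*Real.exp (-δ*‖x‖)*(‖x‖*A + A')
      + (64/δ^2*C₀^2)*Real.exp (-(δ/2)*‖x‖)*(2*H + W) with hΦ
  have hΦint : Integrable Φ := by
    apply Integrable.add
    · have he : (fun x : R3 => 2*C₀^2*Real.exp (-δ*‖x‖)*(‖x‖*A + A'))
          = fun x => (2*C₀^2*A)*(‖x‖*Real.exp (-δ*‖x‖)) + (2*C₀^2*A')*Real.exp (-δ*‖x‖) :=
        funext fun x => by ring
      rw [he]
      exact ((integrable_norm_exp_norm δ hδ).const_mul _).add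
        ((integrable_exp_norm δ hδ).const_mul _)
    · have he : (fun x : R3 => (64/δ^2*C₀^2)*Real.exp (-(δ/2)*‖x‖)*(2*H + W))
          = fun x => ((64/δ^2*C₀^2)*(2*H+W))*Real.exp (-(δ/2)*‖x‖) :=
        funext fun x => by ring
      rw [he]
      exact (integrable_exp_norm (δ/2) hδ2).const_mul _
  have hΦ0 : ∀ x, 0 ≤ Φ x := by
    intro x
    apply add_nonneg
    · apply mul_nonneg (by positivity)
      exact add_nonneg (mul_nonneg (norm_nonneg _) hA0) hA'0
    · apply mul_nonneg (by positivity)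
      linarith
  have hΦI0 : 0 ≤ ∫ x, Φ x := integral_nonneg hΦ0
  refine ⟨(∫ x : R3, Φ x) + 1, by linarith, ?_⟩
  intro ξ hξ
  have hξ0 : (0:ℝ) < ‖ξ‖ := by linarith
  have hξ2 : (1:ℝ) ≤ ‖ξ‖^2 := by nlinarith
  have hnormswap : ∀ x y : R3, ‖x - y + ξ‖ = ‖y - (x+ξ)‖ := fun x y => by
    rw [show x - y + ξ = -(y - (x+ξ)) by abel, norm_neg]
  have hnormmeas : ∀ x : R3, Measurable fun y : R3 => ‖x - y + ξ‖ :=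
    fun x => (((continuous_const.sub continuous_id).add continuous_const).norm).measurable
  -- integrability of inner integrand
  have hinner_int : ∀ x : R3, Integrable (fun y : R3 => f x * f y / ‖x - y + ξ‖) := by
    intro x
    have hconv := (conv_bound δ hδ (x + ξ)).1
    refine (hconv.const_mul (C₀ * f x)).mono'
      (((hmeas.const_mul (f x)).div (hnormmeas x)).aestronglyMeasurable) ?_
    filter_upwards with y
    have hd : 0 ≤ f x * f y / ‖x - y + ξ‖ := by
      apply div_nonneg (mul_nonneg (hnonneg x) (hnonneg y)) (norm_nonneg _)
    rw [Real.norm_eq_abs, abs_of_nonneg hd, div_eq_mul_inv, hnormswap x y]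
    have ht : (0:ℝ) ≤ ‖y - (x+ξ)‖⁻¹ := by positivity
    calc f x * f y * ‖y - (x+ξ)‖⁻¹
        ≤ f x * (C₀ * Real.exp (-δ*‖y‖)) * ‖y - (x+ξ)‖⁻¹ :=
          mul_le_mul_of_nonneg_right
            (mul_le_mul_of_nonneg_left (hdecay y) (hnonneg x)) ht
      _ = C₀ * f x * (Real.exp (-δ*‖y‖) * ‖y - (x+ξ)‖⁻¹) := by ring
  have hinner_const_int : ∀ x : R3, Integrable (fun y : R3 => f x * f y * ‖ξ‖⁻¹) := by
    intro x
    have := (hfint.const_mul (f x)).mul_const ‖ξ‖⁻¹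
    simpa [mul_assoc] using this
  -- key bound on inner integral
  have hP_bound : ∀ x : R3,
      |(∫ y : R3, f x * f y / ‖x - y + ξ‖) - f x * M * ‖ξ‖⁻¹| ≤ Φ x / ‖ξ‖^2 := by
    intro x
    have h1 : ∫ y : R3, f x * f y * ‖ξ‖⁻¹ = f x * M * ‖ξ‖⁻¹ := by
      rw [show (fun y : R3 => f x * f y * ‖ξ‖⁻¹) = fun y => (f x * ‖ξ‖⁻¹) * f y from
        funext fun y => by ring, integral_const_mul, hM]
      ring
    have hsub : (∫ y : R3, f x * f y / ‖x - y + ξ‖) - f x * M * ‖ξ‖⁻¹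
        = ∫ y : R3, f x * f y * (‖x - y + ξ‖⁻¹ - ‖ξ‖⁻¹) := by
      rw [← h1, ← integral_sub (hinner_int x) (hinner_const_int x)]
      congr 1; funext y; rw [div_eq_mul_inv]; ring
    rw [hsub]
    set Q1 : R3 → ℝ := fun y =>
      2*C₀^2*Real.exp (-δ*‖x‖)*Real.exp (-δ*‖y‖)*(‖x‖+‖y‖)/‖ξ‖^2 with hQ1
    set Q2 : R3 → ℝ := fun y =>
      (64/δ^2*C₀^2/‖ξ‖^2) * (Real.exp (-(δ/2)*‖x‖)*Real.exp (-(δ/2)*‖y‖))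
        * (1 + ‖y - (x+ξ)‖⁻¹) with hQ2
    have hQ1int : Integrable Q1 := by
      have he : Q1 = fun y : R3 =>
          (2*C₀^2*Real.exp (-δ*‖x‖)/‖ξ‖^2*‖x‖) * Real.exp (-δ*‖y‖)
          + (2*C₀^2*Real.exp (-δ*‖x‖)/‖ξ‖^2) * (‖y‖ * Real.exp (-δ*‖y‖)) := by
        funext y; rw [hQ1]; ring
      rw [he]
      exact ((integrable_exp_norm δ hδ).const_mul _).add
        ((integrable_norm_exp_norm δ hδ).const_mul _)
    have hQ2int : Integrable Q2 := by
      have he : Q2 = fun y : R3 =>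
          ((64/δ^2*C₀^2/‖ξ‖^2) * Real.exp (-(δ/2)*‖x‖)) * Real.exp (-(δ/2)*‖y‖)
          + ((64/δ^2*C₀^2/‖ξ‖^2) * Real.exp (-(δ/2)*‖x‖))
            * (Real.exp (-(δ/2)*‖y‖) * ‖y - (x+ξ)‖⁻¹) := by
        funext y; rw [hQ2]; ring
      rw [he]
      exact ((integrable_exp_norm (δ/2) hδ2).const_mul _).add
        (((conv_bound (δ/2) hδ2 (x+ξ)).1).const_mul _)
    have habs : |∫ y : R3, f x * f y * (‖x - y + ξ‖⁻¹ - ‖ξ‖⁻¹)|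
        ≤ ∫ y : R3, (Q1 y + Q2 y) := by
      rw [← Real.norm_eq_abs]
      refine norm_integral_le_of_norm_le (hQ1int.add hQ2int) ?_
      filter_upwards with y
      rw [Real.norm_eq_abs]
      exact key_pt C₀ δ hC₀ hδ f hnonneg hdecay ξ hξ x y
    refine habs.trans ?_
    rw [integral_add hQ1int hQ2int]
    have hIQ1 : ∫ y : R3, Q1 y = 2*C₀^2*Real.exp (-δ*‖x‖)*(‖x‖*A + A')/‖ξ‖^2 := by
      have he : Q1 = fun y : R3 =>
          (2*C₀^2*Real.exp (-δ*‖x‖)/‖ξ‖^2*‖x‖) * Real.exp (-δ*‖y‖)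
          + (2*C₀^2*Real.exp (-δ*‖x‖)/‖ξ‖^2) * (‖y‖ * Real.exp (-δ*‖y‖)) := by
        funext y; rw [hQ1]; ring
      rw [he, integral_add ((integrable_exp_norm δ hδ).const_mul _)
        ((integrable_norm_exp_norm δ hδ).const_mul _),
        integral_const_mul, integral_const_mul, ← hA, ← hA']
      ring
    have hIQ2 : ∫ y : R3, Q2 y
        ≤ (64/δ^2*C₀^2)*Real.exp (-(δ/2)*‖x‖)*(2*H + W)/‖ξ‖^2 := by
      set d : ℝ := (64/δ^2*C₀^2/‖ξ‖^2) * Real.exp (-(δ/2)*‖x‖) with hd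
      have hd0 : 0 ≤ d := by positivity
      have he : Q2 = fun y : R3 =>
          d * Real.exp (-(δ/2)*‖y‖)
          + d * (Real.exp (-(δ/2)*‖y‖) * ‖y - (x+ξ)‖⁻¹) := by
        funext y; rw [hQ2, hd]; ring
      rw [he, integral_add ((integrable_exp_norm (δ/2) hδ2).const_mul _)
        (((conv_bound (δ/2) hδ2 (x+ξ)).1).const_mul _),
        integral_const_mul, integral_const_mul, ← hH]
      have h2 := (conv_bound (δ/2) hδ2 (x+ξ)).2
      rw [← hW, ← hH] at h2
      have : d * H + d * (∫ y : R3, Real.exp (-(δ/2)*‖y‖) * ‖y - (x+ξ)‖⁻¹)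
          ≤ d * H + d * (W + H) := by
        have := mul_le_mul_of_nonneg_left h2 hd0
        linarith
      refine this.trans ?_
      rw [hd]; ring_nf; nlinarith [Real.exp_pos (-(δ/2)*‖x‖)]
    calc (∫ y : R3, Q1 y) + ∫ y : R3, Q2 y
        ≤ 2*C₀^2*Real.exp (-δ*‖x‖)*(‖x‖*A + A')/‖ξ‖^2
          + (64/δ^2*C₀^2)*Real.exp (-(δ/2)*‖x‖)*(2*H + W)/‖ξ‖^2 := by
          rw [hIQ1]; linarith
      _ = Φ x / ‖ξ‖^2 := by rw [hΦ]; ring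
  -- outer integral
  have hprodmeas : AEStronglyMeasurable
      (fun p : R3 × R3 => f p.1 * f p.2 / ‖p.1 - p.2 + ξ‖)
      ((volume : Measure R3).prod (volume : Measure R3)) := by
    apply Measurable.aestronglyMeasurable
    have hc : Continuous fun p : R3 × R3 => ‖p.1 - p.2 + ξ‖ :=
      ((continuous_fst.sub continuous_snd).add continuous_const).norm
    exact ((hmeas.comp measurable_fst).mul (hmeas.comp measurable_snd)).div hc.measurable
  have hI_meas : AEStronglyMeasurable
      (fun x : R3 => ∫ y : R3, f x * f y / ‖x - y + ξ‖) volume :=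
    hprodmeas.integral_prod_right'
  have hI_int : Integrable (fun x : R3 => ∫ y : R3, f x * f y / ‖x - y + ξ‖) := by
    have hdom : Integrable (fun x : R3 => Φ x + M*C₀*Real.exp (-δ*‖x‖)) := by
      have h' := (integrable_exp_norm δ hδ).const_mul (M*C₀)
      exact hΦint.add h'
    refine hdom.mono' hI_meas ?_
    filter_upwards with x
    show |∫ y : R3, f x * f y / ‖x - y + ξ‖| ≤ Φ x + M*C₀*Real.exp (-δ*‖x‖)
    have h1 := hP_bound x
    have h2 : Φ x / ‖ξ‖^2 ≤ Φ x := by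
      apply div_le_self (hΦ0 x) hξ2
    have h3 : f x * M * ‖ξ‖⁻¹ ≤ M*C₀*Real.exp (-δ*‖x‖) := by
      have hi : ‖ξ‖⁻¹ ≤ 1 := inv_le_one_of_one_le₀ hξ
      have := hdecay x
      have h4 : f x * M * ‖ξ‖⁻¹ ≤ f x * M := by
        nlinarith [mul_nonneg (hnonneg x) hM0, inv_nonneg.2 (norm_nonneg ξ)]
      nlinarith
    have h5 : 0 ≤ f x * M * ‖ξ‖⁻¹ := mul_nonneg (mul_nonneg (hnonneg x) hM0) (inv_nonneg.2 (norm_nonneg _))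
    have h6 : 0 ≤ M*C₀*Real.exp (-δ*‖x‖) := mul_nonneg (mul_nonneg hM0 hC₀.le) (Real.exp_pos _).le
    rw [abs_sub_le_iff] at h1
    rw [abs_le]
    exact ⟨by linarith [h1.1], by linarith [h1.2]⟩
  have hconst_int : Integrable (fun x : R3 => f x * M * ‖ξ‖⁻¹) := by
    have := hfint.mul_const (M * ‖ξ‖⁻¹)
    simpa [mul_assoc] using this
  have houter : (∫ x : R3, ∫ y : R3, f x * f y / ‖x - y + ξ‖) - M^2/‖ξ‖
      = ∫ x : R3, ((∫ y : R3, f x * f y / ‖x - y + ξ‖) - f x * M * ‖ξ‖⁻¹) := by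
    rw [integral_sub hI_int hconst_int]
    congr 1
    have : ∫ x : R3, f x * M * ‖ξ‖⁻¹ = ∫ x : R3, f x * (M * ‖ξ‖⁻¹) := by
      congr 1; funext x; ring
    rw [this, integral_mul_const, ← hM]
    rw [sq]
    field_simp
  rw [houter]
  have hfinal : |∫ x : R3, ((∫ y : R3, f x * f y / ‖x - y + ξ‖) - f x * M * ‖ξ‖⁻¹)|
      ≤ ∫ x : R3, Φ x / ‖ξ‖^2 := by
    rw [← Real.norm_eq_abs]
    refine norm_integral_le_of_norm_le (hΦint.div_const _) ?_
    filter_upwards with x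
    rw [Real.norm_eq_abs]
    exact hP_bound x
  refine hfinal.trans ?_
  rw [integral_div]
  apply div_le_div_of_nonneg_right ?_ (by positivity)
  · linarith
end
end

section
/- Let s ≥ 2 be an integer, r > 0, and ξ_i = (r cos(2(i−1)π/s), r sin(2(i−1)π/s), 0) for i = 1, …, s. For j ∈ {1,…,s} let Ω_j be the set of points x = (x₁, x₂, x₃) ∈ ℝ³ such that (x₁,x₂) ≠ (0,0) and the angle between the planar vector (x₁,x₂) and the planar part (ξ_j)' = (r cos(2(j−1)π/s), r sin(2(j−1)π/s)) of ξ_j is at most π/s, i.e. ⟨(x₁,x₂)/|(x₁,x₂)|, (ξ_j)'/|(ξ_j)'|⟩ ≥ cos(π/s). Then for all i, j ∈ {1,…,s} and all x ∈ Ω_j, |x − ξ_i| ≥ (1/2)|ξ_j − ξ_i|. -/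
noncomputable section

open MeasureTheory Real Filter

open Real

lemma core_trig (s : ℕ) (hs : 2 ≤ s) (ψ : ℝ) (hψ0 : 0 ≤ ψ) (hψ : ψ ≤ π / s) (k : ℤ) :
    Real.cos (ψ + 2 * π * k / s) ≤ 0 ∨
    2 * Real.cos (ψ + 2 * π * k / s) ^ 2 ≤ 1 + Real.cos (2 * π * k / s) := by
  have hs0 : (0:ℝ) < s := by positivity
  have hsZ : (0:ℤ) < (s:ℤ) := by exact_mod_cast (by omega : 0 < s)
  set n : ℤ := k % (s:ℤ) with hn
  have hn0 : 0 ≤ n := Int.emod_nonneg k (by omega)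
  have hns : n < (s:ℤ) := Int.emod_lt_of_pos k hsZ
  have hdiv : (s:ℤ) * (k / (s:ℤ)) + n = k := Int.mul_ediv_add_emod k (s:ℤ)
  have harg : (2 * π * k / s : ℝ) = 2 * π * n / s + (k / (s:ℤ) : ℤ) * (2 * π) := by
    have hk : ((k:ℝ)) = (s:ℝ) * ((k / (s:ℤ) : ℤ) : ℝ) + (n:ℝ) := by exact_mod_cast hdiv.symm
    field_simp [hk]; linear_combination hk
  have h1 : Real.cos (ψ + 2 * π * k / s) = Real.cos (ψ + 2 * π * n / s) := by
    rw [harg, ← add_assoc, Real.cos_add_int_mul_two_pi]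
  have h2 : Real.cos (2 * π * k / s) = Real.cos (2 * π * n / s) := by
    rw [harg, Real.cos_add_int_mul_two_pi]
  rw [h1, h2]
  rcases eq_or_lt_of_le hn0 with h0 | h1n
  · right
    rw [← h0]
    simp only [Int.cast_zero, mul_zero, zero_div, Real.cos_zero, add_zero]
    nlinarith [Real.neg_one_le_cos ψ, Real.cos_le_one ψ]
  -- now 1 ≤ n
  set δ := 2 * π * n / s with hδ
  set t := ψ + δ with ht
  by_cases hc : Real.cos t ≤ 0
  · left; exact hc
  right
  push_neg at hc
  have h2s : (2:ℝ) ≤ s := by exact_mod_cast hs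
  have hπs : π / s ≤ π / 2 := div_le_div_of_nonneg_left pi_pos.le two_pos h2s
  have hps : 2 * π / (s:ℝ) = 2 * (π / s) := by ring
  have hn1 : (1:ℝ) ≤ (n:ℝ) := by exact_mod_cast h1n
  have hnsR : (n:ℝ) ≤ (s:ℝ) - 1 := by
    have : n ≤ (s:ℤ) - 1 := by omega
    exact_mod_cast this
  have hδl : 2 * π / s ≤ δ := by
    rw [hδ, div_le_div_iff₀ hs0 hs0]
    have h : (0:ℝ) ≤ 2 * π * (s:ℝ) * ((n:ℝ) - 1) :=
      mul_nonneg (by positivity) (by linarith)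
    nlinarith [h]
  have hδu : δ ≤ 2 * π - 2 * π / s := by
    rw [hδ]
    rw [div_le_iff₀ hs0, sub_mul, div_mul_cancel₀ _ (ne_of_gt hs0)]
    nlinarith [pi_pos]
  have hδ0 : 0 < δ := lt_of_lt_of_le (by positivity) hδl
  have ht0 : 0 < t := by rw [ht]; linarith
  have htu : t ≤ 2 * π - π / s := by
    rw [ht]; have := div_pos pi_pos hs0; linarith [hps]
  have hcos2 : Real.cos (2 * t) = 2 * Real.cos t ^ 2 - 1 := Real.cos_two_mul t
  by_cases htA : t < π / 2
  · -- case A : cos 2t ≤ cos δ since δ ≤ 2t ≤ π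
    have h2tπ : 2 * t ≤ π := by linarith
    have hδ2t : δ ≤ 2 * t := by rw [ht]; linarith
    have := Real.cos_le_cos_of_nonneg_of_le_pi hδ0.le h2tπ hδ2t
    linarith
  · push_neg at htA
    have ht3 : 3 * π / 2 < t := by
      by_contra hcon
      push_neg at hcon
      have : Real.cos t ≤ 0 :=
        Real.cos_nonpos_of_pi_div_two_le_of_le htA (by linarith)
      linarith
    -- δ ≥ π
    have hδπ : π ≤ δ := by
      have : ψ ≤ π / 2 := le_trans hψ hπs
      rw [ht] at ht3; linarith
    -- cos 2t = cos (4π - 2t), cos δ = cos (2π - δ)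
    have e1 : Real.cos (4 * π - 2 * t) = Real.cos (2 * t) := by
      have := Real.cos_add_int_mul_two_pi (-(2 * t)) 2
      rw [Real.cos_neg] at this
      rw [← this]; ring_nf
    have e2 : Real.cos (2 * π - δ) = Real.cos δ := Real.cos_two_pi_sub δ
    have hb1 : 0 ≤ 2 * π - δ := by linarith
    have hb2 : 4 * π - 2 * t ≤ π := by linarith
    have hb3 : 2 * π - δ ≤ 4 * π - 2 * t := by
      rw [ht]
      have hψπs : ψ ≤ π / s := hψ
      have := div_pos pi_pos hs0
      have hpsx := hps
      linarith [htu]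
    have := Real.cos_le_cos_of_nonneg_of_le_pi hb1 hb2 hb3
    rw [e1, e2] at this
    linarith
/-- for x in the sector Ω_j around ξ_j, |x − ξ_i| ≥ (1/2)|ξ_j − ξ_i|.
(Here ξ_i of the paper is `xiP s r (i-1)`, so indices range over 0,…,s−1.) -/
theorem sector_distance_bound
    (s : ℕ) (hs : 2 ≤ s) (r : ℝ) (hr : 0 < r)
    (i j : ℕ) (hi : i ∈ Finset.range s) (hj : j ∈ Finset.range s)
    (x : R3) (hx : ¬(x 0 = 0 ∧ x 1 = 0))
    (hang : Real.cos (π / s) ≤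
      (x 0 * Real.cos (2 * π * j / s) + x 1 * Real.sin (2 * π * j / s))
        / Real.sqrt ((x 0)^2 + (x 1)^2)) :
    (1/2) * ‖xiP s r j - xiP s r i‖ ≤ ‖x - xiP s r i‖ := by
  have hs0 : (0:ℝ) < s := by
    have : 0 < s := by omega
    exact_mod_cast this
  set ci := Real.cos (2 * π * i / s) with hci
  set si := Real.sin (2 * π * i / s) with hsi
  set cj := Real.cos (2 * π * j / s) with hcj
  set sj := Real.sin (2 * π * j / s) with hsj
  -- norms in coordinates
  have hnorm : ∀ v : R3, ‖v‖ = Real.sqrt (v 0 ^ 2 + v 1 ^ 2 + v 2 ^ 2) := by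
    intro v
    rw [EuclideanSpace.norm_eq, Fin.sum_univ_three]
    simp [Real.norm_eq_abs, sq_abs]
  have hc0 : ∀ m : ℕ, xiP s r m 0 = r * Real.cos (2 * π * m / s) := by
    intro m; simp [xiP, pt]
  have hc1 : ∀ m : ℕ, xiP s r m 1 = r * Real.sin (2 * π * m / s) := by
    intro m; simp [xiP, pt]
  have hc2 : ∀ m : ℕ, xiP s r m 2 = 0 := by
    intro m; simp [xiP, pt]
  have hsub : ∀ (u v : R3) (k : Fin 3), (u - v) k = u k - v k := fun u v k => rfl
  -- positivity of ρ
  have h2 : 0 < (x 0)^2 + (x 1)^2 := by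
    rcases not_and_or.mp hx with h | h
    · have : 0 < (x 0)^2 := by positivity
      nlinarith [sq_nonneg (x 1)]
    · have : 0 < (x 1)^2 := by positivity
      nlinarith [sq_nonneg (x 0)]
  set ρ := Real.sqrt ((x 0)^2 + (x 1)^2) with hρ
  have hρpos : 0 < ρ := Real.sqrt_pos.mpr h2
  have hρ2 : ρ^2 = (x 0)^2 + (x 1)^2 := Real.sq_sqrt h2.le
  -- polar angle
  set z : ℂ := ⟨x 0, x 1⟩ with hz'
  have hz : z ≠ 0 := by
    intro h
    exact hx (by simpa [hz', Complex.ext_iff] using h)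
  have habs : ‖z‖ = ρ := by
    rw [Complex.norm_def, Complex.normSq_apply, hρ]
    norm_num [hz', pow_two]
  set β := Complex.arg z with hβ
  have hx0 : x 0 = ρ * Real.cos β := by
    rw [hβ, Complex.cos_arg hz, habs]
    field_simp [hz']
    rfl
  have hx1 : x 1 = ρ * Real.sin β := by
    rw [hβ, Complex.sin_arg, habs]
    field_simp [hz']
    rfl
  -- the hypothesis in terms of the angle
  have hcosj : Real.cos (π / s) ≤ Real.cos (β - 2 * π * j / s) := by
    have e : (x 0 * cj + x 1 * sj) / ρ = Real.cos (β - 2 * π * j / s) := by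
      rw [Real.cos_sub, hx0, hx1]
      field_simp
      ring
    rw [← e]
    exact hang
  -- define ψ
  set ψ := Real.arccos (Real.cos (β - 2 * π * j / s)) with hψdef
  have hψ0 : 0 ≤ ψ := Real.arccos_nonneg _
  have hπs2 : π / s ≤ π / 2 := by
    apply div_le_div_of_nonneg_left Real.pi_pos.le two_pos
    exact_mod_cast hs
  have hψπ : ψ ≤ π / s := by
    have h1 : ψ ≤ Real.arccos (Real.cos (π / s)) :=
      Real.strictAntiOn_arccos.antitoneOn
        ⟨Real.neg_one_le_cos _, Real.cos_le_one _⟩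
        ⟨Real.neg_one_le_cos _, Real.cos_le_one _⟩ hcosj
    rwa [Real.arccos_cos (by positivity) (by linarith [Real.pi_pos])] at h1
  have hcψ : Real.cos ψ = Real.cos (β - 2 * π * j / s) :=
    Real.cos_arccos (Real.neg_one_le_cos _) (Real.cos_le_one _)
  have hsψ : Real.sin ψ = |Real.sin (β - 2 * π * j / s)| := by
    rw [hψdef, Real.sin_arccos,
      show 1 - Real.cos (β - 2 * π * j / s) ^ 2 = Real.sin (β - 2 * π * j / s) ^ 2 by
        nlinarith [Real.sin_sq_add_cos_sq (β - 2 * π * j / s)]]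
    exact Real.sqrt_sq_eq_abs _
  -- the integer k and key cosine identities
  set k : ℤ := if 0 ≤ Real.sin (β - 2 * π * j / s) then (j:ℤ) - i else (i:ℤ) - j with hk
  have hkc : Real.cos (ψ + 2 * π * k / s) = Real.cos (β - 2 * π * i / s) := by
    by_cases hsgn : 0 ≤ Real.sin (β - 2 * π * j / s)
    · have hkv : ((k:ℝ)) = (j:ℝ) - i := by
        rw [hk]; simp [hsgn]
      rw [hkv, show 2 * π * ((j:ℝ) - i) / s = 2 * π * j / s - 2 * π * i / s by ring,
        Real.cos_add, hcψ, hsψ, abs_of_nonneg hsgn, ← Real.cos_add]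
      congr 1
      ring
    · have hkv : ((k:ℝ)) = (i:ℝ) - j := by
        rw [hk]; simp [hsgn]
      rw [hkv, show 2 * π * ((i:ℝ) - j) / s = 2 * π * i / s - 2 * π * j / s by ring,
        Real.cos_add, hcψ, hsψ, abs_of_neg (lt_of_not_ge hsgn)]
      rw [show Real.cos (β - 2 * π * j / s) * Real.cos (2 * π * i / s - 2 * π * j / s) -
          -Real.sin (β - 2 * π * j / s) * Real.sin (2 * π * i / s - 2 * π * j / s) =
          Real.cos (β - 2 * π * j / s) * Real.cos (2 * π * i / s - 2 * π * j / s) +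
          Real.sin (β - 2 * π * j / s) * Real.sin (2 * π * i / s - 2 * π * j / s) by ring,
        ← Real.cos_sub]
      congr 1
      ring
  have hkd : Real.cos (2 * π * k / s) = Real.cos (2 * π * j / s - 2 * π * i / s) := by
    by_cases hsgn : 0 ≤ Real.sin (β - 2 * π * j / s)
    · have hkv : ((k:ℝ)) = (j:ℝ) - i := by rw [hk]; simp [hsgn]
      rw [hkv]; congr 1; ring
    · have hkv : ((k:ℝ)) = (i:ℝ) - j := by rw [hk]; simp [hsgn]
      rw [hkv, ← Real.cos_neg]; congr 1; ring
  -- apply the core trigonometric lemma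
  have hcore := core_trig s hs ψ hψ0 hψπ k
  rw [hkc, hkd] at hcore
  -- scalar abbreviations
  have hcA : Real.cos (β - 2 * π * i / s) = Real.cos β * ci + Real.sin β * si := by
    rw [Real.cos_sub]
  have hcD : Real.cos (2 * π * j / s - 2 * π * i / s) = cj * ci + sj * si := by
    rw [Real.cos_sub]
  set cA := Real.cos β * ci + Real.sin β * si with hcAdef
  set cD := cj * ci + sj * si with hcDdef
  rw [hcA, hcD] at hcore
  have hcDge : -1 ≤ cD := by rw [← hcD]; exact Real.neg_one_le_cos _
  -- rewrite the goal in coordinates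
  rw [hnorm, hnorm, hsub, hsub, hsub, hsub, hsub, hsub, hc0, hc1, hc2, hc0, hc1, hc2]
  set A := (r * cj - r * ci)^2 + (r * sj - r * si)^2 + ((0:ℝ) - 0)^2 with hA
  set B := (x 0 - r * ci)^2 + (x 1 - r * si)^2 + (x 2 - 0)^2 with hB
  have hA0 : 0 ≤ A := by positivity
  have h14 : (1/2 : ℝ) * Real.sqrt A = Real.sqrt (A / 4) := by
    rw [show A / 4 = A * (1/2)^2 by ring, Real.sqrt_mul hA0,
      Real.sqrt_sq (by norm_num : (0:ℝ) ≤ 1/2)]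
    ring
  rw [h14]
  apply Real.sqrt_le_sqrt
  -- pythagorean identities
  have hpi : ci^2 + si^2 = 1 := by
    rw [hci, hsi, add_comm]; exact Real.sin_sq_add_cos_sq _
  have hpj : cj^2 + sj^2 = 1 := by
    rw [hcj, hsj, add_comm]; exact Real.sin_sq_add_cos_sq _
  have hAeq : A = 2 * r^2 * (1 - cD) := by
    rw [hA, hcDdef]
    linear_combination r^2 * hpj + r^2 * hpi
  have hBeq : B = ρ^2 - 2 * r * (ρ * cA) + r^2 + (x 2)^2 := by
    rw [hB, hcAdef, hx0, hx1]
    linear_combination ρ^2 * Real.sin_sq_add_cos_sq β + r^2 * hpi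
  rw [hAeq, hBeq]
  clear_value A B cA cD ρ ci si cj sj
  rcases hcore with hcase | hcase
  · -- cos ≤ 0
    have hprod : 0 ≤ 2 * r * ρ * (-cA) :=
      mul_nonneg (by positivity) (neg_nonneg.mpr hcase)
    have h1 : 0 ≤ r^2 * (1 + cD) := mul_nonneg (sq_nonneg r) (by linarith)
    linarith [hprod, h1, sq_nonneg ρ, sq_nonneg (x 2)]
  · -- 2 cA² ≤ 1 + cD
    have h := mul_le_mul_of_nonneg_left hcase (by positivity : (0:ℝ) ≤ r^2 / 2)
    linarith [sq_nonneg (ρ - r * cA), h, sq_nonneg (x 2)]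
end
end

section
/- For every δ ∈ (0,1) there exists a constant C > 0 such that for every integer s ≥ 2 and every r > 0 with 2(1−δ) r sin(π/s) ≥ 1, Σ_{i=2}^{s} exp(−(1−δ) |ξ₁ − ξ_i|) ≤ C exp(−(1−δ) · 2 r sin(π/s)), where ξ_i = (r cos(2(i−1)π/s), r sin(2(i−1)π/s), 0); equivalently, since |ξ₁ − ξ_i| = 2r sin((i−1)π/s), the sum Σ_{k=1}^{s−1} exp(−(1−δ)·2r sin(kπ/s)) is at most C exp(−(1−δ)·2r sin(π/s)). -/
noncomputable section

open MeasureTheory Real Filter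

/-! ### Auxiliary lemmas for `sum_exp_distance_bound` -/

lemma geo_aux' (ρ : ℝ) (h0 : 0 ≤ ρ) (h1 : ρ < 1) (n : ℕ) :
    ∑ i ∈ Finset.Icc 1 n, ρ ^ i ≤ (1 - ρ)⁻¹ := by
  have h2 : (0:ℝ) < 1 - ρ := by linarith
  calc ∑ i ∈ Finset.Icc 1 n, ρ ^ i ≤ ∑ i ∈ Finset.range (n+1), ρ ^ i := by
        apply Finset.sum_le_sum_of_subset_of_nonneg
        · intro x hx; simp only [Finset.mem_Icc] at hx; simp [Finset.mem_range]; omega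
        · intro i _ _; positivity
    _ ≤ (1 - ρ)⁻¹ := by
        rw [geom_sum_eq (by linarith)]
        rw [show (ρ ^ (n+1) - 1) / (ρ - 1) = (1 - ρ ^ (n+1)) / (1 - ρ) by
          rw [← neg_div_neg_eq]; ring_nf]
        rw [div_le_iff₀ h2, inv_mul_cancel₀ (ne_of_gt h2)]
        have := pow_nonneg h0 (n+1); linarith

lemma refl_aux' (ρ : ℝ) (s : ℕ) :
    ∑ i ∈ Finset.Icc 1 (s-1), ρ ^ (s - i) = ∑ i ∈ Finset.Icc 1 (s-1), ρ ^ i := by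
  refine Finset.sum_nbij' (fun i => s - i) (fun i => s - i) ?_ ?_ ?_ ?_ ?_ <;>
    simp only [Finset.mem_Icc] <;> intro a ha <;> first | omega | trivial

lemma norm_xi_aux (s : ℕ) (hs : 0 < s) (r : ℝ) (hr : 0 ≤ r) (i : ℕ) (hi : i ≤ s) :
    ‖xiP s r 0 - xiP s r i‖ = 2 * r * Real.sin (π * i / s) := by
  have hθ : (2 * π * i / s) / 2 = π * i / s := by ring
  have hsin : Real.sin (π * i / s) ^ 2 = (1 - Real.cos (2 * π * i / s)) / 2 := by
    rw [← hθ, Real.sin_sq_eq_half_sub]; ring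
  have hs0 : Real.sin (π * i / s) ≥ 0 := by
    apply Real.sin_nonneg_of_nonneg_of_le_pi
    · positivity
    · rw [div_le_iff₀ (by exact_mod_cast hs)]
      have : (i:ℝ) ≤ s := by exact_mod_cast hi
      nlinarith [Real.pi_pos]
  have h1 : ∀ j : Fin 3, (xiP s r 0 - xiP s r i) j =
      ![r - r * Real.cos (2 * π * i / s), -(r * Real.sin (2 * π * i / s)), 0] j := by
    intro j
    fin_cases j <;> simp [xiP, pt, WithLp.equiv_symm_apply]
  rw [EuclideanSpace.norm_eq]
  simp only [h1]
  rw [Fin.sum_univ_three]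
  simp only [Matrix.cons_val_zero, Matrix.cons_val_one, Matrix.head_cons, Real.norm_eq_abs,
    sq_abs, Matrix.cons_val_two, Matrix.tail_cons]
  have : (r - r * Real.cos (2 * π * i / s)) ^ 2 + (-(r * Real.sin (2 * π * i / s))) ^ 2 + 0 ^ 2
      = (2 * r * Real.sin (π * i / s)) ^ 2 := by
    have hc := Real.sin_sq_add_cos_sq (2 * π * i / s)
    linear_combination r^2 * hc + (-4*r^2) * hsin
  rw [this, Real.sqrt_sq (by positivity)]

/-- Σ_{i=2}^{s} e^{−(1−δ)|ξ₁−ξ_i|} ≤ C e^{−(1−δ)·2r sin(π/s)}.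
(Here ξ_i of the paper is `xiP s r (i-1)`.) -/
theorem sum_exp_distance_bound
    (δ : ℝ) (hδ : δ ∈ Set.Ioo (0:ℝ) 1) :
    ∃ C > (0:ℝ), ∀ s : ℕ, 2 ≤ s → ∀ r : ℝ, 0 < r →
      1 ≤ 2 * (1 - δ) * r * Real.sin (π / s) →
      ∑ i ∈ Finset.Icc 1 (s-1), Real.exp (-(1 - δ) * ‖xiP s r 0 - xiP s r i‖)
        ≤ C * Real.exp (-(1 - δ) * (2 * r * Real.sin (π / s))) := by
  have hπ := Real.pi_pos
  set ρ : ℝ := Real.exp (-(2/π)) with hρdef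
  have hρ0 : 0 < ρ := Real.exp_pos _
  have hρ1 : ρ < 1 := by
    rw [hρdef, Real.exp_lt_one_iff]
    have : (0:ℝ) < 2/π := by positivity
    linarith
  have hρc : (0:ℝ) < 1 - ρ := by linarith
  refine ⟨Real.exp 1 * (2 * (1-ρ)⁻¹), by positivity, ?_⟩
  intro s hs r hr hone
  have hs0 : (0:ℝ) < s := by exact_mod_cast Nat.lt_of_lt_of_le two_pos hs
  have hs2 : (2:ℝ) ≤ s := by exact_mod_cast hs
  have hσ0 : (0:ℝ) < 1 - δ := by linarith [hδ.2]
  set σ : ℝ := 1 - δ with hσdef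
  set B : ℝ := Real.sin (π / s) with hBdef
  have hBπ : π / s ≤ π / 2 := by
    rw [div_le_div_iff₀ hs0 two_pos]; nlinarith
  have hB0 : 0 < B := by
    apply Real.sin_pos_of_pos_of_lt_pi (by positivity)
    calc π / s ≤ π / 2 := hBπ
      _ < π := by linarith
  have hBle : B ≤ π / s := Real.sin_le (by positivity)
  set t : ℝ := σ * (2 * r * B) with htdef
  have ht1 : 1 ≤ t := by
    rw [htdef, show σ * (2 * r * B) = 2 * σ * r * B from by ring]; exact hone
  -- per-term bound
  have hterm : ∀ i ∈ Finset.Icc 1 (s-1),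
      Real.exp (-σ * ‖xiP s r 0 - xiP s r i‖)
        ≤ Real.exp 1 * Real.exp (-t) * (ρ ^ i + ρ ^ (s - i)) := by
    intro i hi
    simp only [Finset.mem_Icc] at hi
    obtain ⟨hi1, hi2⟩ := hi
    have his : i ≤ s := by omega
    set k : ℕ := min i (s - i) with hkdef
    have hk1 : 1 ≤ k := by omega
    have hk2 : 2 * k ≤ s := by omega
    have hk2' : (2:ℝ) * k ≤ s := by exact_mod_cast hk2
    have hk1' : (1:ℝ) ≤ k := by exact_mod_cast hk1
    set A : ℝ := Real.sin (π * k / s) with hAdef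
    have hkπ : π * k / s ≤ π / 2 := by
      rw [div_le_div_iff₀ hs0 two_pos]; nlinarith
    have hkπ0 : 0 ≤ π * k / s := by positivity
    -- the norm equals 2 r A
    have hnorm : ‖xiP s r 0 - xiP s r i‖ = 2 * r * A := by
      rw [norm_xi_aux s (by omega) r hr.le i his, hAdef]
      rcases min_cases i (s - i) with ⟨hmin, _⟩ | ⟨hmin, _⟩
      · rw [hkdef, hmin]
      · rw [hkdef, hmin]
        have hcast : ((s - i : ℕ) : ℝ) = (s:ℝ) - i := by
          rw [Nat.cast_sub his]
        rw [hcast, show π * ((s:ℝ) - i) / s = π - π * i / s by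
          field_simp, Real.sin_pi_sub]
    -- monotonicity: B ≤ A
    have hAB : B ≤ A := by
      rw [hBdef, hAdef]
      apply Real.strictMonoOn_sin.monotoneOn
      · constructor
        · calc -(π/2) ≤ 0 := by linarith
            _ ≤ π / s := by positivity
        · exact hBπ
      · exact ⟨by linarith, hkπ⟩
      · rw [div_le_div_iff₀ hs0 hs0]
        nlinarith [mul_nonneg (mul_nonneg hπ.le hs0.le) (sub_nonneg.mpr hk1')]
    -- Jordan: 2k/s ≤ A
    have hA2 : 2 * (k:ℝ) / s ≤ A := by
      have := Real.mul_le_sin hkπ0 hkπ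
      calc 2 * (k:ℝ) / s = 2 / π * (π * k / s) := by field_simp
        _ ≤ A := this
    -- key exponent inequality
    have hq1 : 1 ≤ A / B := (one_le_div hB0).mpr hAB
    have hq2 : 2 * (k:ℝ) / π ≤ A / B := by
      rw [show 2 * (k:ℝ) / π = (2 * k / s) / (π / s) by
        field_simp]
      exact div_le_div₀ (le_trans (by positivity) hA2) hA2 hB0 hBle
    have hσ2rA : σ * (2 * r * A) = t * (A / B) := by
      rw [htdef]; field_simp
    have hkey : t + (2 * (k:ℝ) / π - 1) ≤ σ * (2 * r * A) := by
      rw [hσ2rA]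
      nlinarith [mul_nonneg (sub_nonneg.mpr ht1) (sub_nonneg.mpr hq1)]
    -- conclude per-term
    have hρk : Real.exp (-(2 * (k:ℝ) / π)) = ρ ^ k := by
      rw [hρdef, ← Real.exp_nat_mul]
      congr 1; push_cast; ring
    have h1 : Real.exp (-σ * ‖xiP s r 0 - xiP s r i‖)
        ≤ Real.exp 1 * Real.exp (-t) * ρ ^ k := by
      rw [hnorm, ← hρk, ← Real.exp_add, ← Real.exp_add]
      apply Real.exp_le_exp.mpr
      linarith [hkey]
    refine h1.trans ?_
    apply mul_le_mul_of_nonneg_left _ (by positivity)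
    rcases min_cases i (s - i) with ⟨hmin, _⟩ | ⟨hmin, _⟩
    · rw [hkdef, hmin]
      exact le_add_of_nonneg_right (pow_nonneg hρ0.le _)
    · rw [hkdef, hmin]
      exact le_add_of_nonneg_left (pow_nonneg hρ0.le _)
  -- sum it up
  have hRHS : -(1 - δ) * (2 * r * Real.sin (π / s)) = -t := by
    rw [htdef, hσdef, hBdef]; ring
  rw [hRHS]
  calc ∑ i ∈ Finset.Icc 1 (s-1), Real.exp (-(1 - δ) * ‖xiP s r 0 - xiP s r i‖)
      ≤ ∑ i ∈ Finset.Icc 1 (s-1), Real.exp 1 * Real.exp (-t) * (ρ ^ i + ρ ^ (s - i)) :=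
        Finset.sum_le_sum hterm
    _ = Real.exp 1 * Real.exp (-t) *
        ∑ i ∈ Finset.Icc 1 (s-1), (ρ ^ i + ρ ^ (s - i)) := by
        rw [Finset.mul_sum]
    _ ≤ Real.exp 1 * Real.exp (-t) * (2 * (1 - ρ)⁻¹) := by
        apply mul_le_mul_of_nonneg_left _ (by positivity)
        rw [Finset.sum_add_distrib, refl_aux' ρ s]
        have := geo_aux' ρ hρ0.le hρ1 (s-1)
        linarith
    _ = Real.exp 1 * (2 * (1 - ρ)⁻¹) * Real.exp (-t) := by ring
end
end

section
/- Let V : (0,∞) → ℝ be measurable and bounded, and suppose there are constants a > 0, θ > 0, m ∈ (0,1), C_V > 0 and R₀ > 0 such that |V(ρ) − 1 − a ρ^{−m}| ≤ C_V ρ^{−(m+θ)} for all ρ ≥ R₀. Let U : ℝ³ → ℝ be measurable with 0 ≤ U(x) ≤ C₀ e^{−δ|x|} for some constants C₀, δ > 0, and set A₁ = ∫_{ℝ³} U². Then there exists C > 0 such that for every ξ ∈ ℝ³ with |ξ| ≥ 2R₀ + 2, | ∫_{ℝ³} (V(|x|) − 1) U(x − ξ)² dx − a A₁ / |ξ|^m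 | ≤ C / |ξ|^{m + θ'}, where θ' = min(θ, 1). -/
noncomputable section

open MeasureTheory Real Filter

lemma aux_rpow_lip {m c r s : ℝ} (hm : 0 < m) (hc : 0 < c) (hr : c ≤ r) (hs : c ≤ s) :
    |r ^ (-m) - s ^ (-m)| ≤ m * c ^ (-(m+1)) * |r - s| := by
  have key : ∀ x ∈ Set.Ici c, HasDerivWithinAt (fun t : ℝ => t ^ (-m))
      (-m * x ^ (-m - 1)) (Set.Ici c) x := fun x hx =>
    ((Real.hasDerivAt_rpow_const (p := -m) (Or.inl (hc.trans_le hx).ne'))).hasDerivWithinAt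
  have bound : ∀ x ∈ Set.Ici c, ‖-m * x ^ (-m-1)‖ ≤ m * c ^ (-(m+1)) := by
    intro x hx
    have hx0 : 0 < x := hc.trans_le hx
    rw [norm_mul, norm_neg, Real.norm_eq_abs, Real.norm_eq_abs, abs_of_pos hm,
      abs_of_pos (Real.rpow_pos_of_pos hx0 _)]
    have : x ^ (-m-1) ≤ c ^ (-(m+1)) := by
      rw [show -m - 1 = -(m+1) by ring]
      exact Real.rpow_le_rpow_of_nonpos hc hx (by linarith)
    nlinarith [Real.rpow_pos_of_pos hx0 (-m-1)]
  have := (convex_Ici c).norm_image_sub_le_of_norm_hasDerivWithin_le key bound hs hr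
  simpa [Real.norm_eq_abs, abs_sub_comm] using this

lemma aux_sq_le_exp {x : ℝ} (hx : 0 ≤ x) : x^2/4 ≤ Real.exp x := by
  have h1 : 1 + x/2 ≤ Real.exp (x/2) := by
    have := Real.add_one_le_exp (x/2); linarith
  have h2 : (1 + x/2)^2 ≤ Real.exp (x/2) ^ 2 :=
    pow_le_pow_left₀ (by linarith) h1 2
  have h3 : Real.exp (x/2) ^ 2 = Real.exp x := by
    rw [sq, ← Real.exp_add]; norm_num
  nlinarith [h2, h3]

lemma aux_integrable_exp (δ : ℝ) (hδ : 0 < δ) :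
    Integrable (fun x : R3 => Real.exp (-δ * ‖x‖)) := by
  set c : ℝ := max 1 (4/δ) with hc
  have hc1 : 1 ≤ c := le_max_left _ _
  have hcδ : 4/δ ≤ c := le_max_right _ _
  have hcd : 4 ≤ c * δ := by rwa [div_le_iff₀ hδ] at hcδ
  have base : Integrable (fun x : R3 => c^4 * (1 + ‖x‖) ^ (-(4:ℝ))) := by
    exact (integrable_one_add_norm (by simp [finrank_euclideanSpace]; norm_num)).const_mul _
  apply base.mono' ((Real.continuous_exp.comp
    (continuous_const.mul continuous_norm)).aestronglyMeasurable)
  filter_upwards with x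
  simp only [Function.comp]
  have ht : (0:ℝ) ≤ ‖x‖ := norm_nonneg x
  rw [Real.norm_eq_abs, abs_of_pos (Real.exp_pos _)]
  have h1 : 1 + ‖x‖ ≤ c * Real.exp (δ * ‖x‖ / 4) := by
    have e1 : 1 + δ * ‖x‖ / 4 ≤ Real.exp (δ * ‖x‖ / 4) := by
      have := Real.add_one_le_exp (δ * ‖x‖ / 4); linarith
    nlinarith [mul_nonneg (mul_nonneg hδ.le ht) ht]
  have h2 : (1 + ‖x‖)^(4:ℕ) ≤ c^4 * Real.exp (δ * ‖x‖) := by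
    calc (1 + ‖x‖)^(4:ℕ) ≤ (c * Real.exp (δ * ‖x‖ / 4))^(4:ℕ) :=
          pow_le_pow_left₀ (by linarith) h1 4
      _ = c^4 * Real.exp (δ * ‖x‖) := by
          rw [mul_pow, ← Real.exp_nat_mul]; ring_nf
  have hpos : (0:ℝ) < 1 + ‖x‖ := by linarith
  have hr4 : (1 + ‖x‖) ^ (-(4:ℝ)) = ((1 + ‖x‖)^(4:ℕ))⁻¹ := by
    rw [Real.rpow_neg hpos.le, ← Real.rpow_natCast (1+‖x‖) 4]; norm_num
  rw [hr4, le_mul_inv_iff₀ (by positivity)]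
  have := Real.exp_pos (-δ * ‖x‖)
  calc Real.exp (-δ * ‖x‖) * (1+‖x‖)^(4:ℕ)
      ≤ Real.exp (-δ*‖x‖) * (c^4 * Real.exp (δ*‖x‖)) := by nlinarith [h2]
    _ = c^4 := by rw [mul_comm (c^4) _, ← mul_assoc, ← Real.exp_add]; ring_nf; simp


set_option maxHeartbeats 2000000 in
/-- ∫ (V(|x|)−1) U(x−ξ)² dx = aA₁/|ξ|^m + O(|ξ|^{−(m+θ')}). -/
theorem potential_perturbation_expansion
    (V : ℝ → ℝ) (hmeas : Measurable V) (hbdd : ∃ Cb : ℝ, ∀ ρ ∈ Set.Ioi (0:ℝ), |V ρ| ≤ Cb)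
    (a θ m C_V R₀ : ℝ) (ha : 0 < a) (hθ : 0 < θ) (hm : m ∈ Set.Ioo (0:ℝ) 1)
    (hCV : 0 < C_V) (hR₀ : 0 < R₀)
    (hV : ∀ ρ : ℝ, R₀ ≤ ρ → |V ρ - 1 - a * ρ ^ (-m)| ≤ C_V * ρ ^ (-(m + θ)))
    (U : R3 → ℝ) (hU : Measurable U)
    (C₀ δ : ℝ) (hC₀ : 0 < C₀) (hδ : 0 < δ)
    (hUb : ∀ x : R3, 0 ≤ U x ∧ U x ≤ C₀ * Real.exp (-δ * ‖x‖)) :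
    ∃ C > (0:ℝ), ∀ ξ : R3, 2 * R₀ + 2 ≤ ‖ξ‖ →
      |(∫ x : R3, (V ‖x‖ - 1) * (U (x - ξ))^2)
        - a * (∫ x : R3, (U x)^2) / ‖ξ‖ ^ m|
      ≤ C / ‖ξ‖ ^ (m + min θ 1) := by
  obtain ⟨Cb, hCb⟩ := hbdd
  have hCb0 : 0 ≤ Cb := (abs_nonneg _).trans (hCb 1 (by norm_num))
  obtain ⟨hm0, hm1⟩ := hm
  set θ' := min θ 1 with hθ'def
  have hθ'0 : 0 < θ' := lt_min hθ one_pos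
  have hθ'θ : θ' ≤ θ := min_le_left _ _
  have hθ'1 : θ' ≤ 1 := min_le_right _ _
  -- integrability facts
  have hUm : Measurable fun y : R3 => (U y)^2 := hU.pow_const 2
  have hexpδ := aux_integrable_exp δ hδ
  have hexpδ2 := aux_integrable_exp (δ/2) (by linarith)
  have hUsq_le : ∀ y : R3, (U y)^2 ≤ C₀^2 * Real.exp (-δ * ‖y‖) := by
    intro y
    obtain ⟨h0, h1⟩ := hUb y
    have he1 : Real.exp (-δ * ‖y‖) ≤ 1 := Real.exp_le_one_iff.mpr
      (by nlinarith [norm_nonneg y])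
    nlinarith [Real.exp_pos (-δ * ‖y‖)]
  have hUsq : Integrable fun y : R3 => (U y)^2 := by
    refine (hexpδ.const_mul (C₀^2)).mono' hUm.aestronglyMeasurable ?_
    filter_upwards with y
    rw [Real.norm_eq_abs, abs_of_nonneg (sq_nonneg _)]
    exact hUsq_le y
  have hnormU : Integrable fun y : R3 => ‖y‖ * (U y)^2 := by
    refine (hexpδ2.const_mul (2 * C₀^2 / δ)).mono'
      (measurable_norm.mul hUm).aestronglyMeasurable ?_
    filter_upwards with y
    have ht : (0:ℝ) ≤ ‖y‖ := norm_nonneg y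
    rw [Real.norm_eq_abs, abs_of_nonneg (mul_nonneg ht (sq_nonneg _))]
    have key : ‖y‖ * Real.exp (-δ * ‖y‖) ≤ (2/δ) * Real.exp (-(δ/2) * ‖y‖) := by
      have h1 : δ * ‖y‖ / 2 ≤ Real.exp (δ * ‖y‖ / 2) := by
        have := Real.add_one_le_exp (δ * ‖y‖ / 2); linarith
      have h2 : Real.exp (δ*‖y‖/2) * Real.exp (-δ*‖y‖) = Real.exp (-(δ/2)*‖y‖) := by
        rw [← Real.exp_add]; ring_nf
      have h3 : ‖y‖ * Real.exp (-δ*‖y‖) ≤ (2/δ) * (Real.exp (δ*‖y‖/2) * Real.exp (-δ*‖y‖)) := by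
        rw [← mul_assoc]
        apply mul_le_mul_of_nonneg_right _ (Real.exp_pos _).le
        rw [div_mul_eq_mul_div, le_div_iff₀ hδ]
        nlinarith
      rw [h2] at h3; exact h3
    calc ‖y‖ * (U y)^2 ≤ ‖y‖ * (C₀^2 * Real.exp (-δ*‖y‖)) := by
          apply mul_le_mul_of_nonneg_left (hUsq_le y) ht
      _ = C₀^2 * (‖y‖ * Real.exp (-δ*‖y‖)) := by ring
      _ ≤ C₀^2 * ((2/δ) * Real.exp (-(δ/2)*‖y‖)) := by
          apply mul_le_mul_of_nonneg_left key (by positivity)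
      _ = 2 * C₀^2 / δ * Real.exp (-(δ/2)*‖y‖) := by ring
  -- the dominating function H
  set K₁ : ℝ := C_V * 2^(m+θ) with hK₁
  set K₂ : ℝ := a * m * 2^(m+1) with hK₂
  set K₃ : ℝ := (Cb + 1 + a) * C₀^2 * (16/δ^2) with hK₃
  have hK₁0 : 0 < K₁ := by rw [hK₁]; positivity
  have hK₂0 : 0 < K₂ := by rw [hK₂]; positivity
  have hK₃0 : 0 < K₃ := by rw [hK₃]; positivity
  set H : R3 → ℝ := fun y => K₁ * (U y)^2 + K₂ * (‖y‖ * (U y)^2) + K₃ * Real.exp (-δ * ‖y‖)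
    with hHdef
  have hHint : Integrable H :=
    ((hUsq.const_mul K₁).add (hnormU.const_mul K₂)).add (hexpδ.const_mul K₃)
  have hHnn : ∀ y, 0 ≤ H y := by
    intro y
    have h1 : (0:ℝ) ≤ (U y)^2 := sq_nonneg _
    have h2 : (0:ℝ) ≤ ‖y‖ := norm_nonneg y
    have h3 : (0:ℝ) < Real.exp (-δ * ‖y‖) := Real.exp_pos _
    simp only [hHdef]
    have := mul_nonneg h2 h1
    have := mul_nonneg hK₁0.le h1
    have := mul_nonneg hK₂0.le (mul_nonneg h2 h1)
    have := mul_nonneg hK₃0.le h3.le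
    linarith
  refine ⟨(∫ y : R3, H y) + 1, by have : (0:ℝ) ≤ ∫ y : R3, H y := integral_nonneg hHnn; positivity, ?_⟩
  intro ξ hξ
  set R := ‖ξ‖ with hRdef
  have hR2 : (2:ℝ) ≤ R := by have := hξ; simp only [hRdef]; linarith
  have hR1 : (1:ℝ) ≤ R := by linarith
  have hR0 : (0:ℝ) < R := by linarith
  have hRhalf : R₀ + 1 ≤ R/2 := by have := hξ; simp only [hRdef] at *; linarith
  -- change of variables
  have hshift : (∫ x : R3, (V ‖x‖ - 1) * (U (x - ξ))^2)
      = ∫ y : R3, (V ‖y + ξ‖ - 1) * (U y)^2 := by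
    rw [← integral_add_right_eq_self (fun x : R3 => (V ‖x‖ - 1) * (U (x - ξ))^2) ξ]
    simp
  have hae : ∀ᵐ y : R3, y ≠ -ξ := by
    have : volume ({-ξ} : Set R3) = 0 := measure_singleton _
    rw [ae_iff]; simpa [Set.setOf_eq_eq_singleton] using this
  have hFm : AEStronglyMeasurable (fun y : R3 => (V ‖y + ξ‖ - 1) * (U y)^2) volume :=
    (((hmeas.comp ((measurable_id.add_const ξ).norm)).sub measurable_const).mul
      hUm).aestronglyMeasurable
  have hFint : Integrable (fun y : R3 => (V ‖y + ξ‖ - 1) * (U y)^2) := by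
    refine (hUsq.const_mul (Cb + 1)).mono' hFm ?_
    filter_upwards [hae] with y hy
    have hr0 : 0 < ‖y + ξ‖ := by
      rw [norm_pos_iff]
      intro h; exact hy (eq_neg_of_add_eq_zero_left h)
    have hVb := hCb ‖y + ξ‖ (Set.mem_Ioi.mpr hr0)
    rw [Real.norm_eq_abs, abs_mul, abs_of_nonneg (sq_nonneg (U y))]
    have : |V ‖y + ξ‖ - 1| ≤ Cb + 1 := by
      have := abs_sub_abs_le_abs_sub (V ‖y + ξ‖) 1
      have h1 : |V ‖y + ξ‖ - 1| ≤ |V ‖y + ξ‖| + |(1:ℝ)| := abs_sub _ _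
      simp only [abs_one] at h1
      linarith
    exact mul_le_mul_of_nonneg_right this (sq_nonneg _)
  have hGint : Integrable (fun y : R3 => a / R ^ m * (U y)^2) := hUsq.const_mul _
  have hGeq : (∫ y : R3, a / R ^ m * (U y)^2)
      = a * (∫ x : R3, (U x)^2) / R ^ m := by
    rw [integral_const_mul]; ring
  -- the pointwise bound
  have hptwise : ∀ᵐ y : R3, ‖(V ‖y + ξ‖ - 1) * (U y)^2 - a / R ^ m * (U y)^2‖
      ≤ R ^ (-(m + θ')) * H y := by
    filter_upwards [hae] with y hy
    have hr0 : 0 < ‖y + ξ‖ := by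
      rw [norm_pos_iff]
      intro h; exact hy (eq_neg_of_add_eq_zero_left h)
    set r := ‖y + ξ‖ with hrdef
    set ρ := ‖y‖ with hρdef
    have hρ0 : (0:ℝ) ≤ ρ := norm_nonneg y
    have hU2 : (0:ℝ) ≤ (U y)^2 := sq_nonneg _
    have haRm : a / R ^ m = a * R ^ (-m) := by
      rw [Real.rpow_neg hR0.le]; ring
    have heq : (V r - 1) * (U y)^2 - a / R ^ m * (U y)^2
        = (V r - 1 - a * R ^ (-m)) * (U y)^2 := by rw [haRm]; ring
    rw [heq, Real.norm_eq_abs, abs_mul, abs_of_nonneg hU2]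
    have hRpowpos : (0:ℝ) < R ^ (-(m + θ')) := Real.rpow_pos_of_pos hR0 _
    have hr_sub : |r - R| ≤ ρ := by
      have := abs_norm_sub_norm_le (y + ξ) ξ
      simpa [hrdef, hRdef, hρdef] using this
    rcases le_or_gt ρ (R/2) with hin | hout
    · -- inner region
      have hrge : R/2 ≤ r := by
        have h1 : R ≤ r + ρ := by
          have := norm_sub_le (y + ξ) y
          simpa [hrdef, hρdef, hRdef] using this
        linarith
      have hrR0 : R₀ ≤ r := by linarith
      have h1 := hV r hrR0
      have hA : r ^ (-(m+θ)) ≤ 2^(m+θ) * R ^ (-(m+θ')) := by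
        have h2 : r ^ (-(m+θ)) ≤ (R/2) ^ (-(m+θ)) :=
          Real.rpow_le_rpow_of_nonpos (by linarith) hrge (by linarith)
        have h3 : (R/2) ^ (-(m+θ)) = 2^(m+θ) * R ^ (-(m+θ)) := by
          rw [Real.div_rpow hR0.le (by norm_num : (0:ℝ) ≤ 2),
            Real.rpow_neg (by norm_num : (0:ℝ) ≤ 2), div_inv_eq_mul]
          ring
        have h4 : R ^ (-(m+θ)) ≤ R ^ (-(m+θ')) :=
          Real.rpow_le_rpow_of_exponent_le hR1 (by linarith)
        calc r ^ (-(m+θ)) ≤ 2^(m+θ) * R ^ (-(m+θ)) := h2.trans_eq h3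
          _ ≤ 2^(m+θ) * R ^ (-(m+θ')) := by
              apply mul_le_mul_of_nonneg_left h4 (by positivity)
      have hB : (R/2) ^ (-(m+1)) ≤ 2^(m+1) * R ^ (-(m+θ')) := by
        have h3 : (R/2) ^ (-(m+1)) = 2^(m+1) * R ^ (-(m+1)) := by
          rw [Real.div_rpow hR0.le (by norm_num : (0:ℝ) ≤ 2),
            Real.rpow_neg (by norm_num : (0:ℝ) ≤ 2), div_inv_eq_mul]
          ring
        have h4 : R ^ (-(m+1)) ≤ R ^ (-(m+θ')) :=
          Real.rpow_le_rpow_of_exponent_le hR1 (by linarith)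
        calc (R/2) ^ (-(m+1)) = 2^(m+1) * R ^ (-(m+1)) := h3
          _ ≤ 2^(m+1) * R ^ (-(m+θ')) := by
              apply mul_le_mul_of_nonneg_left h4 (by positivity)
      have h5 : |r ^ (-m) - R ^ (-m)| ≤ m * (R/2) ^ (-(m+1)) * |r - R| :=
        aux_rpow_lip hm0 (by linarith : (0:ℝ) < R/2) hrge (by linarith)
      have hB2 : m * (R/2) ^ (-(m+1)) * |r - R| ≤ m * (2^(m+1) * R ^ (-(m+θ'))) * ρ := by
        apply mul_le_mul (mul_le_mul_of_nonneg_left hB hm0.le) hr_sub (abs_nonneg _)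
          (by positivity)
      have hmain : |V r - 1 - a * R ^ (-m)|
          ≤ R ^ (-(m+θ')) * (K₁ + K₂ * ρ) := by
        have hsplit : V r - 1 - a * R ^ (-m)
            = (V r - 1 - a * r ^ (-m)) + a * (r ^ (-m) - R ^ (-m)) := by ring
        calc |V r - 1 - a * R ^ (-m)|
            ≤ |V r - 1 - a * r ^ (-m)| + |a * (r ^ (-m) - R ^ (-m))| := by
              rw [hsplit]; exact abs_add_le _ _
          _ ≤ C_V * r ^ (-(m+θ)) + a * (m * (R/2) ^ (-(m+1)) * |r - R|) := by
              rw [abs_mul, abs_of_pos ha]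
              exact add_le_add h1 (mul_le_mul_of_nonneg_left h5 ha.le)
          _ ≤ C_V * (2^(m+θ) * R ^ (-(m+θ'))) + a * (m * (2^(m+1) * R ^ (-(m+θ'))) * ρ) := by
              exact add_le_add (mul_le_mul_of_nonneg_left hA hCV.le)
                (mul_le_mul_of_nonneg_left hB2 ha.le)
          _ = R ^ (-(m+θ')) * (K₁ + K₂ * ρ) := by rw [hK₁, hK₂]; ring
      calc |V r - 1 - a * R ^ (-m)| * (U y)^2
          ≤ R ^ (-(m+θ')) * (K₁ + K₂ * ρ) * (U y)^2 :=
            mul_le_mul_of_nonneg_right hmain hU2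
        _ = R ^ (-(m+θ')) * (K₁ * (U y)^2 + K₂ * (ρ * (U y)^2)) := by ring
        _ ≤ R ^ (-(m+θ')) * H y := by
            apply mul_le_mul_of_nonneg_left _ hRpowpos.le
            simp only [hHdef]
            have h6 : (0:ℝ) < Real.exp (-δ * ρ) := Real.exp_pos _
            linarith [mul_pos hK₃0 h6]
    · -- outer region
      have hVb := hCb r (Set.mem_Ioi.mpr hr0)
      have hRm : R ^ (-m) ≤ 1 := by
        calc R ^ (-m) ≤ R ^ (0:ℝ) :=
            Real.rpow_le_rpow_of_exponent_le hR1 (by linarith)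
          _ = 1 := Real.rpow_zero R
      have habs : |V r - 1 - a * R ^ (-m)| ≤ Cb + 1 + a := by
        have h0 : 0 ≤ a * R ^ (-m) := by positivity
        have h1 : |V r - 1 - a * R ^ (-m)| ≤ |V r| + |1 + a * R ^ (-m)| := by
          rw [sub_sub]; exact abs_sub _ _
        rw [abs_of_nonneg (by linarith : (0:ℝ) ≤ 1 + a * R ^ (-m))] at h1
        have h2 : a * R ^ (-m) ≤ a := by nlinarith
        linarith
      obtain ⟨hU0, hU1⟩ := hUb y
      have hUexp : (U y)^2 ≤ C₀^2 * Real.exp (-δ * ρ) * Real.exp (-δ * ρ) := by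
        nlinarith [Real.exp_pos (-δ * ρ)]
      have hexpρ : Real.exp (-δ * ρ) ≤ Real.exp (-δ * (R/2)) :=
        Real.exp_le_exp.mpr (by nlinarith)
      have hexpR : Real.exp (-δ * (R/2)) ≤ 16/δ^2 * R ^ (-(m+θ')) := by
        have h1 := aux_sq_le_exp (x := δ * (R/2)) (by positivity)
        have h2 : Real.exp (-δ * (R/2)) = (Real.exp (δ * (R/2)))⁻¹ := by
          rw [← Real.exp_neg]; ring_nf
        have h3 : (0:ℝ) < (δ * (R/2))^2 / 4 := by positivity
        have h4 : Real.exp (-δ * (R/2)) ≤ ((δ * (R/2))^2 / 4)⁻¹ := by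
          rw [h2]
          exact inv_anti₀ h3 h1
        have h5 : ((δ * (R/2))^2 / 4)⁻¹ = 16/δ^2 * (R^2)⁻¹ := by
          field_simp; ring
        have h6 : (R^2 : ℝ)⁻¹ = R ^ (-(2:ℝ)) := by
          rw [Real.rpow_neg hR0.le, ← Real.rpow_natCast R 2]; norm_num
        have h7 : R ^ (-(2:ℝ)) ≤ R ^ (-(m+θ')) :=
          Real.rpow_le_rpow_of_exponent_le hR1 (by linarith)
        calc Real.exp (-δ * (R/2)) ≤ 16/δ^2 * (R^2)⁻¹ := h4.trans_eq h5
          _ = 16/δ^2 * R ^ (-(2:ℝ)) := by rw [h6]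
          _ ≤ 16/δ^2 * R ^ (-(m+θ')) := by
              apply mul_le_mul_of_nonneg_left h7 (by positivity)
      have hexp0 : (0:ℝ) < Real.exp (-δ * ρ) := Real.exp_pos _
      calc |V r - 1 - a * R ^ (-m)| * (U y)^2
          ≤ (Cb + 1 + a) * (U y)^2 := mul_le_mul_of_nonneg_right habs hU2
        _ ≤ (Cb + 1 + a) * (C₀^2 * Real.exp (-δ * ρ) * Real.exp (-δ * ρ)) := by
            apply mul_le_mul_of_nonneg_left hUexp (by linarith)
        _ ≤ (Cb + 1 + a) * (C₀^2 * Real.exp (-δ * ρ) * (16/δ^2 * R ^ (-(m+θ')))) := by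
            apply mul_le_mul_of_nonneg_left _ (by linarith)
            apply mul_le_mul_of_nonneg_left (hexpρ.trans hexpR) (by positivity)
        _ = R ^ (-(m+θ')) * (K₃ * Real.exp (-δ * ρ)) := by rw [hK₃]; ring
        _ ≤ R ^ (-(m+θ')) * H y := by
            apply mul_le_mul_of_nonneg_left _ hRpowpos.le
            simp only [hHdef]
            linarith [mul_nonneg hK₁0.le hU2, mul_nonneg hK₂0.le (mul_nonneg hρ0 hU2)]
  -- conclude
  have key := norm_integral_le_of_norm_le (hHint.const_mul (R ^ (-(m+θ')))) hptwise
  rw [integral_const_mul] at key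
  rw [hshift, ← hGeq, ← integral_sub hFint hGint]
  have hIH : (0:ℝ) ≤ ∫ y : R3, H y := integral_nonneg hHnn
  have hfin : R ^ (-(m+θ')) * (∫ y : R3, H y)
      ≤ ((∫ y : R3, H y) + 1) / R ^ (m+θ') := by
    rw [Real.rpow_neg hR0.le, div_eq_mul_inv, mul_comm ((∫ y : R3, H y) + 1)]
    have : (0:ℝ) < (R ^ (m+θ'))⁻¹ := by
      have := Real.rpow_pos_of_pos hR0 (m+θ'); positivity
    exact mul_le_mul_of_nonneg_left (by linarith) this.le
  calc ‖∫ y : R3, ((V ‖y + ξ‖ - 1) * (U y)^2 - a / R ^ m * (U y)^2)‖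
      ≤ R ^ (-(m+θ')) * ∫ y : R3, H y := key
    _ ≤ ((∫ y : R3, H y) + 1) / R ^ (m+θ') := hfin
end
end
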